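/- arXiv:1707.05541 — 7 statements merged into one kernel-verified Lean document; each statement's English description precedes it below -/
import Mathlib

section
/- A permutation π of {0,1,…,n−1} belongs to C_n if and only if for every triple of distinct indices (i,j,k), the triple (π(i), π(j), π(k)) is cyclically co-oriented with (i,j,k). -/
/-- Two ordered triples of elements of a linear order have the same relative
order pattern. -/
def SameOrder {α : Type*} [LinearOrder α] (i j k a b c : α) : Prop :=
  (i < j ↔ a < b) ∧ (j < k ↔ b < c) ∧ (i < k ↔ a < c)

/-- The triple `(a, b, c)` is cyclically co-oriented with `(i, j, k)`:
some cyclic rotation of `(a, b, c)` has the same relative order as `(i, j, k)`. -/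
def CyclicallyCoOriented {α : Type*} [LinearOrder α] (i j k a b c : α) : Prop :=
  SameOrder i j k a b c ∨ SameOrder i j k b c a ∨ SameOrder i j k c a b

/-- `π` belongs to `C_n`: there is `k` such that `π i = i + k (mod n)` for all `i`. -/
def IsCyclicShift {n : ℕ} (π : Equiv.Perm (Fin n)) : Prop :=
  ∃ k : Fin n, ∀ i, π i = i + k

/-- The cyclic orientation of a triple. -/
def Orient {α : Type*} [LinearOrder α] (a b c : α) : Prop :=
  (a < b ∧ b < c) ∨ (b < c ∧ c < a) ∨ (c < a ∧ a < b)

lemma coOriented_iff_orient {n : ℕ} {i j k a b c : Fin n}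
    (h1 : i ≠ j) (h2 : j ≠ k) (h3 : i ≠ k)
    (g1 : a ≠ b) (g2 : b ≠ c) (g3 : a ≠ c) :
    CyclicallyCoOriented i j k a b c ↔ (Orient i j k ↔ Orient a b c) := by
  have e1 := Fin.val_ne_iff.mpr h1
  have e2 := Fin.val_ne_iff.mpr h2
  have e3 := Fin.val_ne_iff.mpr h3
  have f1 := Fin.val_ne_iff.mpr g1
  have f2 := Fin.val_ne_iff.mpr g2
  have f3 := Fin.val_ne_iff.mpr g3
  simp only [CyclicallyCoOriented, SameOrder, Orient, Fin.lt_def]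
  omega

lemma add_val_cases {n : ℕ} (a k : Fin n) :
    ((a + k : Fin n) : ℕ) = a.val + k.val ∨ ((a + k : Fin n) : ℕ) + n = a.val + k.val := by
  have ha := a.isLt
  have hk := k.isLt
  rw [Fin.val_add]
  rcases Nat.lt_or_ge (a.val + k.val) n with h3 | h3
  · left; exact Nat.mod_eq_of_lt h3
  · right
    have : (a.val + k.val) % n = (a.val + k.val) - n := by
      rw [Nat.mod_eq_sub_mod h3, Nat.mod_eq_of_lt (by omega)]
    omega

/-- Pure arithmetic core: adding a constant mod n preserves cyclic orientation. -/
lemma orient_shift_nat (n vi vj vm a b c K : ℕ)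
    (hi : vi < n) (hj : vj < n) (hm : vm < n) (hK : K < n)
    (ha : a < n) (hb : b < n) (hc : c < n)
    (ea : a = vi + K ∨ a + n = vi + K)
    (eb : b = vj + K ∨ b + n = vj + K)
    (ec : c = vm + K ∨ c + n = vm + K) :
    ((vi < vj ∧ vj < vm) ∨ (vj < vm ∧ vm < vi) ∨ (vm < vi ∧ vi < vj)) ↔
      ((a < b ∧ b < c) ∨ (b < c ∧ c < a) ∨ (c < a ∧ a < b)) := by
  omega

/-- Adding a constant preserves cyclic orientation. -/
lemma orient_add {n : ℕ} (i j m k : Fin n) :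
    Orient i j m ↔ Orient (i + k) (j + k) (m + k) := by
  simp only [Orient, Fin.lt_def]
  exact orient_shift_nat n i.val j.val m.val ((i + k : Fin n) : ℕ)
    ((j + k : Fin n) : ℕ) ((m + k : Fin n) : ℕ) k.val
    i.isLt j.isLt m.isLt k.isLt (i + k).isLt (j + k).isLt (m + k).isLt
    (add_val_cases i k) (add_val_cases j k) (add_val_cases m k)

theorem cyclicShift_iff_coOriented {n : ℕ} (hn : 0 < n) (π : Equiv.Perm (Fin n)) :
    IsCyclicShift π ↔
      ∀ i j k : Fin n, i ≠ j → j ≠ k → i ≠ k →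
        CyclicallyCoOriented i j k (π i) (π j) (π k) := by
  haveI : NeZero n := ⟨hn.ne'⟩
  constructor
  · rintro ⟨k, hk⟩ i j m h1 h2 h3
    rw [hk, hk, hk]
    have g1 : i + k ≠ j + k := fun h => h1 (add_right_cancel h)
    have g2 : j + k ≠ m + k := fun h => h2 (add_right_cancel h)
    have g3 : i + k ≠ m + k := fun h => h3 (add_right_cancel h)
    rw [coOriented_iff_orient h1 h2 h3 g1 g2 g3]
    exact orient_add i j m k
  · intro H
    set k : Fin n := π 0 with hkdef
    refine ⟨k, ?_⟩
    -- the "normalized" permutation fixing 0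
    set σ : Equiv.Perm (Fin n) := π.trans (Equiv.subRight k) with hσ
    have hσval : ∀ i, σ i = π i - k := fun i => rfl
    have hσ0 : σ 0 = 0 := by rw [hσval, hkdef, sub_self]
    have hpos : ∀ a : Fin n, a ≠ 0 → 0 < a := by
      intro a ha
      have := Fin.val_ne_iff.mpr ha
      rw [Fin.val_zero] at this
      rw [Fin.lt_def, Fin.val_zero]
      omega
    -- σ also satisfies the orientation condition
    have Hσ : ∀ i j m : Fin n, i ≠ j → j ≠ m → i ≠ m →
        (Orient i j m ↔ Orient (σ i) (σ j) (σ m)) := by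
      intro i j m h1 h2 h3
      have p1 : π i ≠ π j := fun h => h1 (π.injective h)
      have p2 : π j ≠ π m := fun h => h2 (π.injective h)
      have p3 : π i ≠ π m := fun h => h3 (π.injective h)
      have step1 : Orient i j m ↔ Orient (π i) (π j) (π m) :=
        (coOriented_iff_orient h1 h2 h3 p1 p2 p3).mp (H i j m h1 h2 h3)
      have step2 : Orient (π i) (π j) (π m) ↔ Orient (σ i) (σ j) (σ m) := by
        have h' := orient_add (σ i) (σ j) (σ m) k
        have e : ∀ x, σ x + k = π x := by
          intro x; rw [hσval, sub_add_cancel]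
        rw [e, e, e] at h'
        exact h'.symm
      exact step1.trans step2
    -- σ is strictly monotone
    have hmono : StrictMono σ := by
      intro i j hij
      have hij' : i ≠ j := ne_of_lt hij
      have hj0 : j ≠ 0 := by
        intro h
        subst h
        exact absurd hij (by
          rw [Fin.lt_def, Fin.val_zero]
          omega)
      have hsj0 : σ j ≠ 0 := by
        rw [← hσ0]; exact fun h => hj0 (σ.injective h)
      by_cases hi0 : i = 0
      · subst hi0
        rw [hσ0]
        exact hpos _ hsj0
      · have hsi0 : σ i ≠ 0 := by
          rw [← hσ0]; exact fun h => hi0 (σ.injective h)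
        have h0i : (0 : Fin n) ≠ i := fun h => hi0 h.symm
        have h0j : (0 : Fin n) ≠ j := fun h => hj0 h.symm
        have horient : Orient (0 : Fin n) i j := Or.inl ⟨hpos i hi0, hij⟩
        have hres := (Hσ _ _ _ h0i hij' h0j).mp horient
        rw [hσ0] at hres
        have v1 := Fin.val_ne_iff.mpr hsi0
        have v2 := Fin.val_ne_iff.mpr hsj0
        rw [Fin.val_zero] at v1 v2
        simp only [Orient, Fin.lt_def, Fin.val_zero] at hres ⊢
        omega
    -- hence σ = id
    have hid : ∀ i, σ i = i := by
      have hr : Set.range σ = Set.range (id : Fin n → Fin n) := by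
        rw [Set.range_id]
        exact σ.surjective.range_eq
      haveI hwf : WellFoundedLT (Fin n) := inferInstance
      have h := (StrictMono.range_inj (β := Fin n) hmono strictMono_id).mp hr
      intro i
      exact congrFun h i
    intro i
    have h := hid i
    rw [hσval] at h
    exact sub_eq_iff_eq_add.mp h
end

section
/- Let c : [0,1] → ℝ be a C-function and let x₁ < y₁ < y₂ < x₂ be points of [0,1] (the nested configuration). Then c(y₂−x₁) + c(x₂−y₁) ≤ c(y₁−x₁) + c(x₂−y₂); that is, the crossing matching pairing x₁ with y₂ and x₂ with y₁ has cost no larger than the nested matching pairing x₁ with y₁ and x₂ with y₂. -/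
/-- `f` is a `𝒞`-function on `[0,1]`. -/
def IsCFunction (f : ℝ → ℝ) : Prop :=
  ∀ ⦃z₁ z₂ : ℝ⦄, 0 < z₁ → z₁ < z₂ → z₂ < 1 →
    (∀ η : ℝ, 0 < η → η < 1 - z₂ → f z₂ - f z₁ ≤ f (η + z₂) - f (η + z₁)) ∧
    (∀ η : ℝ, z₂ < η → η < 1 → f z₂ - f z₁ ≤ f (η - z₂) - f (η - z₁))

/-- The boundary case `x₁ = 0`, `x₂ = 1`, obtained from the interior
inequalities by a telescoping argument. -/
lemma cFunction_edge (c : ℝ → ℝ) (hc : IsCFunction c) (y₁ y₂ : ℝ)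
    (h₁ : 0 < y₁) (h₂ : y₁ < y₂) (h₃ : y₂ < 1) :
    c y₂ + c (1 - y₁) ≤ c y₁ + c (1 - y₂) := by
  by_contra hcon
  push_neg at hcon
  set ε : ℝ := c y₂ + c (1 - y₁) - (c y₁ + c (1 - y₂)) with hεdef
  have hε : 0 < ε := by simp only [hεdef]; linarith
  set m : ℝ := min y₁ (1 - y₂) with hmdef
  have hm : 0 < m := lt_min h₁ (by linarith)
  have hmy : m ≤ y₁ := min_le_left _ _
  have hmT : m ≤ 1 - y₂ := min_le_right _ _
  -- key decrement estimate: every small increment of `c` in `(0, m)` is ≤ -ε/2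
  have key : ∀ w δ : ℝ, 0 < w → 0 < δ → w + δ < m → c (w + δ) - c w ≤ -(ε/2) := by
    intro w δ hw hδ hwd
    have hwy : w + δ < y₁ := lt_of_lt_of_le hwd hmy
    have hwT : w + δ < 1 - y₂ := lt_of_lt_of_le hwd hmT
    obtain ⟨-, ha⟩ := hc (z₁ := y₁) (z₂ := y₂) h₁ h₂ h₃
    have ha' := ha (1 - δ) (by linarith) (by linarith)
    obtain ⟨hb, hcii⟩ := hc (z₁ := w) (z₂ := w + δ) hw (by linarith) (by linarith)
    have hb' := hb (1 - y₂ - δ - w) (by linarith) (by linarith)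
    have hc' := hcii (1 - y₁ + w) (by linarith) (by linarith)
    have e1 : 1 - y₂ - δ - w + (w + δ) = 1 - y₂ := by ring
    have e2 : 1 - y₂ - δ - w + w = 1 - δ - y₂ := by ring
    have e3 : 1 - y₁ + w - (w + δ) = 1 - δ - y₁ := by ring
    have e4 : 1 - y₁ + w - w = 1 - y₁ := by ring
    rw [e1, e2] at hb'
    rw [e3, e4] at hc'
    linarith
  -- telescoping
  obtain ⟨N, hN⟩ := exists_nat_gt (max 1 ((c (m/2) - c (m/2 + m/4)) / (ε/2)))
  have hN1 : (1:ℝ) < N := lt_of_le_of_lt (le_max_left _ _) hN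
  have hN0 : (0:ℝ) < N := by linarith
  set δ : ℝ := m / (4*N) with hδdef
  have hδ : 0 < δ := by positivity
  have tele : ∀ k : ℕ, k ≤ N → c (m/2 + k * δ) ≤ c (m/2) - k * (ε/2) := by
    intro k hk
    induction k with
    | zero => simp
    | succ n ih =>
      have hn : n ≤ N := Nat.le_of_succ_le hk
      have ihh := ih hn
      have hnN : (n:ℝ) + 1 ≤ N := by exact_mod_cast hk
      have hstep := key (m/2 + n*δ) δ (by positivity) hδ (by
        have h2 : ((n:ℝ)+1)*δ ≤ N*δ := by nlinarith
        have h3 : (N:ℝ)*δ = m/4 := by rw [hδdef, mul_div_assoc', div_eq_div_iff (mul_pos (by norm_num) hN0).ne' (by norm_num)]; ring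
        nlinarith)
      have hcast : ((n+1 : ℕ):ℝ) = (n:ℝ) + 1 := by push_cast; ring
      rw [hcast]
      have e : m/2 + ((n:ℝ) + 1) * δ = (m/2 + n*δ) + δ := by ring
      rw [e]
      linarith
  have hfin := tele N le_rfl
  have hNδ : (N:ℝ) * δ = m/4 := by rw [hδdef, mul_div_assoc', div_eq_div_iff (mul_pos (by norm_num) hN0).ne' (by norm_num)]; ring
  rw [hNδ] at hfin
  have hNb : (c (m/2) - c (m/2 + m/4)) / (ε/2) < N := lt_of_le_of_lt (le_max_right _ _) hN
  have : c (m/2) - c (m/2 + m/4) < N * (ε/2) := by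
    rw [div_lt_iff₀ (by positivity)] at hNb; linarith
  linarith

/-- In the nested configuration `x₁ < y₁ < y₂ < x₂`, the crossing matching is
optimal for a `𝒞`-function cost. -/
theorem cFunction_nested_crossing_optimal (c : ℝ → ℝ) (hc : IsCFunction c)
    (x₁ x₂ y₁ y₂ : ℝ) (hx₁ : 0 ≤ x₁) (h₁ : x₁ < y₁) (h₂ : y₁ < y₂)
    (h₃ : y₂ < x₂) (hx₂ : x₂ ≤ 1) :
    c (y₂ - x₁) + c (x₂ - y₁) ≤ c (y₁ - x₁) + c (x₂ - y₂) := by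
  rcases lt_or_eq_of_le (show x₂ - x₁ ≤ 1 by linarith) with hlt | heq
  · -- interior case: reflect with η = x₂ - x₁ < 1
    obtain ⟨-, hii⟩ := hc (z₁ := y₁ - x₁) (z₂ := y₂ - x₁)
      (by linarith) (by linarith) (by linarith)
    have h := hii (x₂ - x₁) (by linarith) hlt
    have e1 : x₂ - x₁ - (y₂ - x₁) = x₂ - y₂ := by ring
    have e2 : x₂ - x₁ - (y₁ - x₁) = x₂ - y₁ := by ring
    rw [e1, e2] at h
    linarith
  · -- boundary case: x₁ = 0 and x₂ = 1
    have hx1 : x₁ = 0 := by linarith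
    have hx2 : x₂ = 1 := by linarith
    subst hx1; subst hx2
    rw [sub_zero, sub_zero]
    exact cFunction_edge c hc y₁ y₂ h₁ h₂ h₃
end

section
/- Let c : [0,1] → ℝ be a strictly convex, strictly increasing function, and let 0 ≤ x₁ < x₂ < … < x_N ≤ 1 and 0 ≤ y₁ < y₂ < … < y_N ≤ 1. Then for every permutation π of {1,…,N}, Σᵢ c(|xᵢ − yᵢ|) ≤ Σᵢ c(|xᵢ − y_{π(i)}|); that is, the identity permutation is an optimal matching. -/
open Finset

private lemma convex_pair {f : ℝ → ℝ} (hf : ConvexOn ℝ (Set.Icc (0:ℝ) 1) f)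
    {a b u v : ℝ} (ha : a ∈ Set.Icc (0:ℝ) 1) (hb : b ∈ Set.Icc (0:ℝ) 1)
    (hau : a ≤ u) (hav : a ≤ v) (huv : u + v = a + b) :
    f u + f v ≤ f a + f b := by
  have hub : u ≤ b := by linarith
  rcases eq_or_lt_of_le hau with h | h
  · have hv : v = b := by linarith
    rw [← h, hv]
  · have hab : a < b := lt_of_lt_of_le h hub
    set t : ℝ := (u - a) / (b - a) with ht
    have hba : (0:ℝ) < b - a := by linarith
    have htm : t * (b - a) = u - a := div_mul_cancel₀ _ (ne_of_gt hba)
    have ht0 : 0 ≤ t := div_nonneg (by linarith) (le_of_lt hba)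
    have ht1 : t ≤ 1 := by rw [ht, div_le_one hba]; linarith
    have hu : u = (1 - t) * a + t * b := by nlinarith [htm]
    have hv : v = t * a + (1 - t) * b := by nlinarith [htm]
    have h1 := hf.2 ha hb (by linarith : (0:ℝ) ≤ 1 - t) ht0 (by ring)
    have h2 := hf.2 ha hb ht0 (by linarith : (0:ℝ) ≤ 1 - t) (by ring)
    simp only [smul_eq_mul] at h1 h2
    rw [hu, hv]
    calc f ((1 - t) * a + t * b) + f (t * a + (1 - t) * b)
        ≤ ((1 - t) * f a + t * f b) + (t * f a + (1 - t) * f b) := add_le_add h1 h2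
      _ = f a + f b := by ring

private lemma key_ord {f : ℝ → ℝ} (hf : ConvexOn ℝ (Set.Icc (0:ℝ) 1) f)
    (hm : MonotoneOn f (Set.Icc (0:ℝ) 1))
    {p q P Q : ℝ} (hp : p ∈ Set.Icc (0:ℝ) 1) (hq : q ∈ Set.Icc (0:ℝ) 1)
    (hP : P ∈ Set.Icc (0:ℝ) 1) (hQ : Q ∈ Set.Icc (0:ℝ) 1)
    (hpq : p ≤ q) (hqQ : q ≤ Q) (hsum : p + q ≤ P + Q) :
    f p + f q ≤ f P + f Q := by
  rcases le_or_gt p P with h | h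
  · exact add_le_add (hm hp hP h) (hm hq hQ hqQ)
  · have hR : p + q - P ∈ Set.Icc (0:ℝ) 1 := by
      constructor
      · have := hp.1; have := hq.1; linarith
      · have := hQ.2; linarith
    have h1 : f p + f q ≤ f P + f (p + q - P) :=
      convex_pair hf hP hR (le_of_lt h) (by linarith) (by ring)
    have h2 : f (p + q - P) ≤ f Q := hm hR hQ (by linarith)
    linarith

private lemma key_maj {f : ℝ → ℝ} (hf : ConvexOn ℝ (Set.Icc (0:ℝ) 1) f)
    (hm : MonotoneOn f (Set.Icc (0:ℝ) 1))
    {p q P Q : ℝ} (hp : p ∈ Set.Icc (0:ℝ) 1) (hq : q ∈ Set.Icc (0:ℝ) 1)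
    (hP : P ∈ Set.Icc (0:ℝ) 1) (hQ : Q ∈ Set.Icc (0:ℝ) 1)
    (hmax : max p q ≤ max P Q) (hsum : p + q ≤ P + Q) :
    f p + f q ≤ f P + f Q := by
  have e1 : f p + f q = f (min p q) + f (max p q) := by
    rcases le_total p q with h | h <;> simp [min_eq_left h, max_eq_right h,
      min_eq_right h, max_eq_left h] <;> ring
  have e2 : f P + f Q = f (min P Q) + f (max P Q) := by
    rcases le_total P Q with h | h <;> simp [min_eq_left h, max_eq_right h,
      min_eq_right h, max_eq_left h] <;> ring
  rw [e1, e2]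
  exact key_ord hf hm
    ⟨le_min hp.1 hq.1, (min_le_left p q).trans hp.2⟩
    ⟨hp.1.trans (le_max_left p q), max_le hp.2 hq.2⟩
    ⟨le_min hP.1 hQ.1, (min_le_left P Q).trans hP.2⟩
    ⟨hP.1.trans (le_max_left P Q), max_le hP.2 hQ.2⟩
    min_le_max hmax (by rw [min_add_max, min_add_max]; exact hsum)

private lemma monge_abs {f : ℝ → ℝ} (hf : ConvexOn ℝ (Set.Icc (0:ℝ) 1) f)
    (hm : MonotoneOn f (Set.Icc (0:ℝ) 1))
    {a b s t : ℝ} (ha : a ∈ Set.Icc (0:ℝ) 1) (hb : b ∈ Set.Icc (0:ℝ) 1)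
    (hs : s ∈ Set.Icc (0:ℝ) 1) (ht : t ∈ Set.Icc (0:ℝ) 1)
    (hab : a < b) (hst : s < t) :
    f |a - s| + f |b - t| ≤ f |a - t| + f |b - s| := by
  obtain ⟨ha0, ha1⟩ := ha; obtain ⟨hb0, hb1⟩ := hb
  obtain ⟨hs0, hs1⟩ := hs; obtain ⟨ht0, ht1⟩ := ht
  have mem : ∀ u v : ℝ, 0 ≤ u → u ≤ 1 → 0 ≤ v → v ≤ 1 → |u - v| ∈ Set.Icc (0:ℝ) 1 := by
    intro u v h1 h2 h3 h4
    constructor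
    · exact abs_nonneg _
    · rw [abs_le]; constructor <;> linarith
  apply key_maj hf hm (mem a s ha0 ha1 hs0 hs1) (mem b t hb0 hb1 ht0 ht1)
    (mem a t ha0 ha1 ht0 ht1) (mem b s hb0 hb1 hs0 hs1)
  · rw [max_le_iff]
    constructor
    · rcases abs_cases (a - s) with ⟨h1, h2⟩ | ⟨h1, h2⟩
      · have := le_abs_self (b - s); have := le_max_right |a - t| |b - s|; linarith
      · have := neg_le_abs (a - t); have := le_max_left |a - t| |b - s|; linarith
    · rcases abs_cases (b - t) with ⟨h1, h2⟩ | ⟨h1, h2⟩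
      · have := le_abs_self (b - s); have := le_max_right |a - t| |b - s|; linarith
      · have := neg_le_abs (a - t); have := le_max_left |a - t| |b - s|; linarith
  · rcases abs_cases (a - s) with ⟨h1, h1'⟩ | ⟨h1, h1'⟩ <;>
      rcases abs_cases (b - t) with ⟨h2, h2'⟩ | ⟨h2, h2'⟩ <;>
      rcases abs_cases (a - t) with ⟨h3, h3'⟩ | ⟨h3, h3'⟩ <;>
      rcases abs_cases (b - s) with ⟨h4, h4'⟩ | ⟨h4, h4'⟩ <;>
      rw [h1, h2, h3, h4] <;> linarith

private lemma monge_opt : ∀ (N : ℕ) (F : Fin N → Fin N → ℝ),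
    (∀ ⦃i i' j j' : Fin N⦄, i < i' → j < j' → F i j + F i' j' ≤ F i j' + F i' j) →
    ∀ π : Equiv.Perm (Fin N), ∑ i, F i i ≤ ∑ i, F i (π i) := by
  intro N
  induction N with
  | zero => intro F _ π; simp
  | succ n ih =>
    intro F hM π
    have claim : ∀ σ : Equiv.Perm (Fin (n+1)), σ (Fin.last n) = Fin.last n →
        ∑ i, F i i ≤ ∑ i, F i (σ i) := by
      intro σ hσ
      have hne : ∀ i : Fin n, σ i.castSucc ≠ Fin.last n := by
        intro i h
        have h2 := σ.injective (h.trans hσ.symm)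
        exact (Fin.castSucc_lt_last i).ne h2
      have hτinj : Function.Injective (fun i : Fin n => (σ i.castSucc).castPred (hne i)) := by
        intro i j h
        have h2 : σ i.castSucc = σ j.castSucc := by
          have := congrArg Fin.castSucc h
          simpa using this
        exact Fin.castSucc_injective _ (σ.injective h2)
      have hτbij := Finite.injective_iff_bijective.mp hτinj
      let e : Equiv.Perm (Fin n) := Equiv.ofBijective _ hτbij
      have key := ih (fun i j => F i.castSucc j.castSucc)
        (fun i i' j j' hi hj => hM (Fin.castSucc_lt_castSucc_iff.mpr hi)
          (Fin.castSucc_lt_castSucc_iff.mpr hj)) e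
      have he : ∀ i, (e i : Fin n).castSucc = σ i.castSucc := by
        intro i
        show ((σ i.castSucc).castPred (hne i)).castSucc = σ i.castSucc
        simp
      rw [Fin.sum_univ_castSucc (f := fun i => F i i),
        Fin.sum_univ_castSucc (f := fun i => F i (σ i)), hσ]
      apply add_le_add_left
      calc ∑ i : Fin n, F i.castSucc i.castSucc
          ≤ ∑ i : Fin n, F i.castSucc (e i).castSucc := key
        _ = ∑ i : Fin n, F i.castSucc (σ i.castSucc) := by
            apply Finset.sum_congr rfl; intro i _; rw [he]
    by_cases hlast : π (Fin.last n) = Fin.last n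
    · exact claim π hlast
    · set k := π.symm (Fin.last n) with hk
      have hπk : π k = Fin.last n := π.apply_symm_apply _
      have hkne : k ≠ Fin.last n := fun h => hlast (h ▸ hπk)
      have hklt : k < Fin.last n := lt_of_le_of_ne (Fin.le_last k) hkne
      set j := π (Fin.last n) with hj
      have hjne : j ≠ Fin.last n := hlast
      have hjlt : j < Fin.last n := lt_of_le_of_ne (Fin.le_last j) hjne
      set π' : Equiv.Perm (Fin (n+1)) := π * Equiv.swap k (Fin.last n) with hπ'
      have hπ'last : π' (Fin.last n) = Fin.last n := by
        simp [hπ', Equiv.Perm.mul_apply, Equiv.swap_apply_right, hπk]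
      have hπ'k : π' k = j := by
        simp [hπ', Equiv.Perm.mul_apply, Equiv.swap_apply_left, hj]
      have hπ'other : ∀ i : Fin (n+1), i ≠ k → i ≠ Fin.last n → π' i = π i := by
        intro i h1 h2
        simp [hπ', Equiv.Perm.mul_apply, Equiv.swap_apply_of_ne_of_ne h1 h2]
      have hlk : Fin.last n ∈ Finset.univ.erase k :=
        Finset.mem_erase.mpr ⟨Ne.symm hkne, Finset.mem_univ _⟩
      have split : ∀ g : Fin (n+1) → ℝ, ∑ i, g i
          = g k + (g (Fin.last n) + ∑ i ∈ (Finset.univ.erase k).erase (Fin.last n), g i) := by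
        intro g
        rw [Finset.add_sum_erase _ g hlk, Finset.add_sum_erase _ g (Finset.mem_univ k)]
      have h1 : ∑ i, F i i ≤ ∑ i, F i (π' i) := claim π' hπ'last
      have h2 : ∑ i, F i (π' i) ≤ ∑ i, F i (π i) := by
        rw [split (fun i => F i (π' i)), split (fun i => F i (π i))]
        have hrest : ∑ i ∈ (Finset.univ.erase k).erase (Fin.last n), F i (π' i)
            = ∑ i ∈ (Finset.univ.erase k).erase (Fin.last n), F i (π i) := by
          apply Finset.sum_congr rfl
          intro i hi
          obtain ⟨hi1, hi2⟩ := Finset.mem_erase.mp hi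
          rw [hπ'other i (Finset.mem_erase.mp hi2).1 hi1]
        rw [hrest, hπ'k, hπ'last, hπk, ← hj]
        have := hM hklt hjlt
        linarith
      exact h1.trans h2

/-- For a strictly convex, strictly increasing cost on `[0,1]`, the identity
permutation (matching the points in increasing order) is optimal. -/
theorem strictConvex_increasing_identity_optimal {N : ℕ} (c : ℝ → ℝ)
    (hconv : StrictConvexOn ℝ (Set.Icc (0:ℝ) 1) c)
    (hmono : StrictMonoOn c (Set.Icc (0:ℝ) 1))
    (x y : Fin N → ℝ) (hx : StrictMono x) (hy : StrictMono y)
    (hx01 : ∀ i, x i ∈ Set.Icc (0:ℝ) 1) (hy01 : ∀ i, y i ∈ Set.Icc (0:ℝ) 1)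
    (π : Equiv.Perm (Fin N)) :
    ∑ i, c |x i - y i| ≤ ∑ i, c |x i - y (π i)| := by
  exact monge_opt N (fun i j => c |x i - y j|)
    (fun i i' j j' hi hj => monge_abs hconv.convexOn hmono.monotoneOn
      (hx01 i) (hx01 i') (hy01 j) (hy01 j') (hx hi) (hy hj)) π
end

section
/- Consider the assignment problem on [0,1] with cost function c(z) = z^p, and let 0 ≤ x₁ < … < x_N ≤ 1 and 0 ≤ y₁ < … < y_N ≤ 1 (with xᵢ ≠ y_j for all i,j when p < 0). If p > 1, then the identity permutation minimizes Σᵢ |xᵢ − y_{π(i)}|^p over all permutations π of {1,…,N}. If p < 0, then the minimum of Σᵢ |xᵢ − y_{π(i)}|^p over all permutations is attained by some permutation in C_N. -/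
/-- A strictly monotone self-map of `Fin n` satisfies `a ≤ f a`. -/
lemma fin_le_apply {n : ℕ} {f : Fin n → Fin n} (hf : StrictMono f) (a : Fin n) :
    (a : ℕ) ≤ (f a : ℕ) := by
  have key : ∀ k : ℕ, ∀ a : Fin n, (a : ℕ) = k → k ≤ (f a : ℕ) := by
    intro k
    induction k with
    | zero => intro a _; exact Nat.zero_le _
    | succ t ih =>
      intro a ha
      have hb : t < n := by have := a.isLt; omega
      have h1 := ih ⟨t, hb⟩ rfl
      have h2 : (⟨t, hb⟩ : Fin n) < a := by rw [Fin.lt_def]; simp only; omega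
      have h3 := hf h2
      rw [Fin.lt_def] at h3
      omega
  exact key _ a rfl

/-- A strictly monotone self-map of `Fin n` is the identity. -/
lemma fin_strictMono_id {n : ℕ} {f : Fin n → Fin n} (hf : StrictMono f) : ∀ a, f a = a := by
  have hbij : Function.Bijective f :=
    ⟨hf.injective, Finite.injective_iff_surjective.mp hf.injective⟩
  set e := Equiv.ofBijective f hbij with he
  have hg : StrictMono (e.symm : Fin n → Fin n) := by
    intro u v huv
    rcases lt_trichotomy (e.symm u) (e.symm v) with h | h | h
    · exact h
    · exact absurd (e.symm.injective h) (ne_of_lt huv)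
    · exfalso
      have h2 := hf h
      rw [show f (e.symm v) = v from e.apply_symm_apply v,
        show f (e.symm u) = u from e.apply_symm_apply u] at h2
      exact lt_irrefl u (huv.trans h2)
  intro a
  have h1 := fin_le_apply hf a
  have h2 := fin_le_apply hg (f a)
  rw [show e.symm (f a) = a from e.symm_apply_apply a] at h2
  exact Fin.ext (by omega)

/-- A down-closed finite set in `Fin n` is an initial segment. -/
lemma lower_mem_iff {n : ℕ} {F : Finset (Fin n)} (hF : ∀ i j : Fin n, i ≤ j → j ∈ F → i ∈ F) :
    ∀ i : Fin n, i ∈ F ↔ (i : ℕ) < F.card := by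
  intro i
  constructor
  · intro hi
    have hsub : Finset.Iic i ⊆ F := fun j hj => hF j i (Finset.mem_Iic.1 hj) hi
    have hc := Finset.card_le_card hsub
    rw [Fin.card_Iic] at hc
    omega
  · intro hi
    by_contra hmem
    have hsub : F ⊆ Finset.Iio i := by
      intro j hj
      rw [Finset.mem_Iio]
      rcases lt_or_ge j i with h | h
      · exact h
      · exact absurd (hF i j h hj) hmem
    have hc := Finset.card_le_card hsub
    rw [Fin.card_Iio] at hc
    omega

/-- Splitting sums that differ in exactly two places. -/
lemma sum_split {n : ℕ} {α : Type*} [AddCommMonoid α] (h1 h2 : Fin n → α) {i j : Fin n}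
    (hij : i ≠ j) (hk : ∀ k, k ≠ i → k ≠ j → h1 k = h2 k) :
    (∑ k, h1 k) + (h2 i + h2 j) = (∑ k, h2 k) + (h1 i + h1 j) := by
  have key : ∀ h : Fin n → α,
      (∑ k, h k) = (∑ k ∈ Finset.univ \ {i, j}, h k) + (h i + h j) := by
    intro h
    rw [← Finset.sum_pair hij, Finset.sum_sdiff (Finset.subset_univ _)]
  have hc : (∑ k ∈ Finset.univ \ {i, j}, h1 k) = ∑ k ∈ Finset.univ \ {i, j}, h2 k := by
    apply Finset.sum_congr rfl
    intro k hk'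
    simp only [Finset.mem_sdiff, Finset.mem_insert, Finset.mem_singleton] at hk'
    exact hk k (fun h => hk'.2 (Or.inl h)) (fun h => hk'.2 (Or.inr h))
  rw [key h1, key h2, hc]
  abel

/-- Quadrilateral inequality for convex functions. -/
lemma quad_convex {f : ℝ → ℝ} (hf : ConvexOn ℝ Set.univ f) {m M u v : ℝ}
    (hu : m ≤ u) (hv : m ≤ v) (hsum : u + v = m + M) : f u + f v ≤ f m + f M := by
  rcases eq_or_lt_of_le (show m ≤ M by linarith) with heq | hmM
  · have hu' : u = m := by linarith
    have hv' : v = m := by linarith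
    rw [hu', hv', heq]
  · set θ := (M - u) / (M - m) with hθ
    have hMm : 0 < M - m := by linarith
    have h0 : 0 ≤ θ := div_nonneg (by linarith) hMm.le
    have h1 : θ ≤ 1 := by rw [hθ, div_le_one hMm]; linarith
    have e1 := hf.2 (Set.mem_univ m) (Set.mem_univ M) h0 (by linarith : (0:ℝ) ≤ 1 - θ)
      (by ring : θ + (1 - θ) = 1)
    have e2 := hf.2 (Set.mem_univ m) (Set.mem_univ M) (by linarith : (0:ℝ) ≤ 1 - θ) h0
      (by ring : (1 - θ) + θ = 1)
    simp only [smul_eq_mul] at e1 e2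
    have hu_eq : θ * m + (1 - θ) * M = u := by
      rw [hθ]; field_simp; ring
    have hv_eq : (1 - θ) * m + θ * M = v := by
      rw [hθ]; field_simp; ring_nf; nlinarith [hsum]
    rw [hu_eq] at e1
    rw [hv_eq] at e2
    linarith

/-- Strict quadrilateral inequality for strictly convex functions on `(0, ∞)`. -/
lemma quad_strict {f : ℝ → ℝ} (hf : StrictConvexOn ℝ (Set.Ioi 0) f) {m M u v : ℝ}
    (hm : 0 < m) (hu : m < u) (hv : m < v) (hsum : u + v = m + M) : f u + f v < f m + f M := by
  have hMm : 0 < M - m := by linarith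
  have hMu : u < M := by linarith
  set θ := (M - u) / (M - m) with hθ
  have h0 : 0 < θ := div_pos (by linarith) hMm
  have h1 : θ < 1 := by rw [hθ, div_lt_one hMm]; linarith
  have e1 := hf.2 (Set.mem_Ioi.2 hm) (Set.mem_Ioi.2 (show (0:ℝ) < M by linarith))
    (ne_of_lt (show m < M by linarith)) h0 (by linarith : (0:ℝ) < 1 - θ)
    (by ring : θ + (1 - θ) = 1)
  have e2 := hf.2 (Set.mem_Ioi.2 hm) (Set.mem_Ioi.2 (show (0:ℝ) < M by linarith))
    (ne_of_lt (show m < M by linarith)) (by linarith : (0:ℝ) < 1 - θ) h0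
    (by ring : (1 - θ) + θ = 1)
  simp only [smul_eq_mul] at e1 e2
  have hu_eq : θ * m + (1 - θ) * M = u := by
    rw [hθ]; field_simp; ring
  have hv_eq : (1 - θ) * m + θ * M = v := by
    rw [hθ]; field_simp; ring_nf; nlinarith [hsum]
  rw [hu_eq] at e1
  rw [hv_eq] at e2
  linarith

/-- `|t| ^ p` is convex on `ℝ` for `p ≥ 1`. -/
lemma convexOn_abs_rpow {p : ℝ} (hp : 1 ≤ p) :
    ConvexOn ℝ Set.univ (fun t : ℝ => |t| ^ p) := by
  refine ⟨convex_univ, ?_⟩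
  intro a _ b _ c d hc hd hcd
  simp only [smul_eq_mul]
  have h1 : |c * a + d * b| ^ p ≤ (c * |a| + d * |b|) ^ p := by
    apply Real.rpow_le_rpow (abs_nonneg _) _ (by linarith)
    calc |c * a + d * b| ≤ |c * a| + |d * b| := abs_add_le _ _
      _ = c * |a| + d * |b| := by rw [abs_mul, abs_mul, abs_of_nonneg hc, abs_of_nonneg hd]
  have h2 := (convexOn_rpow hp).2 (Set.mem_Ici.2 (abs_nonneg a)) (Set.mem_Ici.2 (abs_nonneg b))
    hc hd hcd
  simp only [smul_eq_mul] at h2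
  exact le_trans h1 h2

/-- `z ^ p` is strictly convex on `(0, ∞)` for `p < 0`. -/
lemma strictConvexOn_rpow_neg {p : ℝ} (hp : p < 0) :
    StrictConvexOn ℝ (Set.Ioi 0) (fun z : ℝ => z ^ p) := by
  apply strictConvexOn_of_deriv2_pos (convex_Ioi 0)
  · intro z hz
    exact (Real.continuousAt_rpow_const z p (Or.inl (ne_of_gt hz))).continuousWithinAt
  · intro z hz
    rw [interior_Ioi] at hz
    have hit : deriv^[2] (fun z : ℝ => z ^ p) = deriv (deriv (fun z : ℝ => z ^ p)) := by
      simp [Function.iterate_succ, Function.iterate_zero, Function.comp]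
    rw [hit]
    have hev : deriv (fun w : ℝ => w ^ p) =ᶠ[nhds z] fun w => p * w ^ (p - 1) := by
      filter_upwards [eventually_gt_nhds hz] with w hw
      exact Real.deriv_rpow_const w p
    rw [hev.deriv_eq]
    rw [deriv_const_mul p (Real.differentiableAt_rpow_const_of_ne (p - 1) (ne_of_gt hz))]
    rw [Real.deriv_rpow_const z (p - 1)]
    have hpos : (0:ℝ) < z ^ (p - 1 - 1) := Real.rpow_pos_of_pos hz _
    nlinarith [mul_pos (mul_pos_of_neg_of_neg hp (show p - 1 < 0 by linarith)) hpos]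

/-- The convex exchange inequality: sorted matching is cheaper. -/
lemma exchange_convex {p : ℝ} (hp : 1 ≤ p) {a b u v : ℝ} (hab : a ≤ b) (huv : u ≤ v) :
    |a - u| ^ p + |b - v| ^ p ≤ |a - v| ^ p + |b - u| ^ p := by
  have h := quad_convex (convexOn_abs_rpow hp) (m := a - v) (M := b - u)
    (u := a - u) (v := b - v) (by linarith) (by linarith) (by ring)
  simpa using h

/-- Part 1: for convex power cost, the identity matching of sorted points is optimal. -/
lemma part1 {N : ℕ} (hN : 0 < N) {p : ℝ} (hp : 1 < p) (x y : Fin N → ℝ)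
    (hx : Monotone x) (hy : Monotone y) :
    ∀ π : Equiv.Perm (Fin N), ∑ i, |x i - y i| ^ p ≤ ∑ i, |x i - y (π i)| ^ p := by
  classical
  obtain ⟨B, hbound⟩ : ∃ B : ℕ, ∀ σ : Equiv.Perm (Fin N),
      (∑ i : Fin N, (i : ℕ) * ((σ i : Fin N) : ℕ)) < B := by
    refine ⟨N * N * N, fun σ => ?_⟩
    obtain ⟨n, rfl⟩ : ∃ n, N = n + 1 := ⟨N - 1, by omega⟩
    calc (∑ i : Fin (n+1), (i : ℕ) * ((σ i : Fin (n+1)) : ℕ))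
        ≤ ∑ _i : Fin (n + 1), n * n := by
          apply Finset.sum_le_sum
          intro i _
          exact Nat.mul_le_mul (Nat.lt_succ_iff.mp i.isLt) (Nat.lt_succ_iff.mp (σ i).isLt)
      _ = (n + 1) * (n * n) := by
          rw [Finset.sum_const, Finset.card_univ, Fintype.card_fin, smul_eq_mul]
      _ < (n + 1) * (n + 1) * (n + 1) := by nlinarith
  have key : ∀ (D : ℕ) (σ : Equiv.Perm (Fin N)),
      B ≤ (∑ i : Fin N, (i : ℕ) * ((σ i : Fin N) : ℕ)) + D →
      ∑ i, |x i - y i| ^ p ≤ ∑ i, |x i - y (σ i)| ^ p := by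
    intro D
    induction D with
    | zero =>
      intro σ h
      exact absurd h (by have := hbound σ; omega)
    | succ d ih =>
      intro σ hs
      by_cases hmono : ∀ i j : Fin N, i < j → σ i < σ j
      · have hid : ∀ i, σ i = i := fin_strictMono_id (fun a b h => hmono a b h)
        apply le_of_eq
        exact Finset.sum_congr rfl fun i _ => by rw [hid i]
      · push_neg at hmono
        obtain ⟨i, j, hij, hle⟩ := hmono
        have hne : σ i ≠ σ j := fun h => (ne_of_lt hij) (σ.injective h)
        have hinv : σ j < σ i := lt_of_le_of_ne hle (fun h => hne h.symm)
        set σ' : Equiv.Perm (Fin N) := σ * Equiv.swap i j with hσ'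
        have happi : σ' i = σ j := by
          rw [hσ', Equiv.Perm.mul_apply, Equiv.swap_apply_left]
        have happj : σ' j = σ i := by
          rw [hσ', Equiv.Perm.mul_apply, Equiv.swap_apply_right]
        have hoff : ∀ k, k ≠ i → k ≠ j → σ' k = σ k := fun k h1 h2 => by
          rw [hσ', Equiv.Perm.mul_apply, Equiv.swap_apply_of_ne_of_ne h1 h2]
        have hmeq := sum_split (fun k : Fin N => (k : ℕ) * ((σ' k : Fin N) : ℕ))
          (fun k : Fin N => (k : ℕ) * ((σ k : Fin N) : ℕ)) (ne_of_lt hij)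
          (fun k h1 h2 => by simp only [hoff k h1 h2])
        simp only [happi, happj] at hmeq
        have hpair : (i : ℕ) * ((σ i : Fin N) : ℕ) + (j : ℕ) * ((σ j : Fin N) : ℕ)
            < (i : ℕ) * ((σ j : Fin N) : ℕ) + (j : ℕ) * ((σ i : Fin N) : ℕ) := by
          have h1 : (i : ℕ) < (j : ℕ) := hij
          have h2 : ((σ j : Fin N) : ℕ) < ((σ i : Fin N) : ℕ) := hinv
          nlinarith
        have hmlt : (∑ k : Fin N, (k : ℕ) * ((σ k : Fin N) : ℕ))
            < ∑ k : Fin N, (k : ℕ) * ((σ' k : Fin N) : ℕ) := by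
          zify at hmeq hpair ⊢
          linarith
        have hcost := sum_split (fun k => |x k - y (σ' k)| ^ p)
          (fun k => |x k - y (σ k)| ^ p) (ne_of_lt hij)
          (fun k h1 h2 => by simp only [hoff k h1 h2])
        simp only [happi, happj] at hcost
        have hex : |x i - y (σ j)| ^ p + |x j - y (σ i)| ^ p
            ≤ |x i - y (σ i)| ^ p + |x j - y (σ j)| ^ p :=
          exchange_convex hp.le (hx hij.le) (hy hinv.le)
        have hC' := ih σ' (by omega)
        calc ∑ i, |x i - y i| ^ p ≤ ∑ k, |x k - y (σ' k)| ^ p := hC'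
          _ ≤ ∑ k, |x k - y (σ k)| ^ p := by linarith
  intro π
  exact key B π (Nat.le_add_left B _)

/-- The combinatorial heart: a permutation whose "sign pattern" satisfies the two
pattern-avoidance conditions is a cyclic shift. -/
lemma comb {N : ℕ} (hN : 0 < N) (σ : Equiv.Perm (Fin N)) (ε : Fin N → Prop)
    (hA : ∀ i j : Fin N, i < j → σ i < σ j → (ε i ↔ ε j))
    (hB : ∀ i j : Fin N, i < j → σ j < σ i → ε i ∧ ¬ ε j) : IsCyclicShift σ := by
  classical
  by_cases hmono : ∀ i j : Fin N, i < j → σ i < σ j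
  · refine ⟨⟨0, hN⟩, fun i => ?_⟩
    rw [fin_strictMono_id (fun a b h => hmono a b h) i]
    apply Fin.ext
    rw [Fin.val_add]
    simp [Nat.mod_eq_of_lt i.isLt]
  · push_neg at hmono
    obtain ⟨i0, j0, hij0, hle0⟩ := hmono
    have hne0 : σ i0 ≠ σ j0 := fun h => (ne_of_lt hij0) (σ.injective h)
    have hinv0 : σ j0 < σ i0 := lt_of_le_of_ne hle0 (fun h => hne0 h.symm)
    obtain ⟨hεi0, hεj0⟩ := hB i0 j0 hij0 hinv0
    set S : Finset (Fin N) := Finset.univ.filter ε with hS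
    set m : ℕ := S.card with hm
    have hdc : ∀ i j : Fin N, i ≤ j → j ∈ S → i ∈ S := by
      intro i j hij hj
      rw [hS, Finset.mem_filter] at hj ⊢
      refine ⟨Finset.mem_univ _, ?_⟩
      rcases eq_or_lt_of_le hij with rfl | h
      · exact hj.2
      · rcases lt_trichotomy (σ i) (σ j) with h' | h' | h'
        · exact (hA i j h h').2 hj.2
        · exact absurd (σ.injective h') (ne_of_lt h)
        · exact (hB i j h h').1
    have hmem := lower_mem_iff hdc
    have hε_iff : ∀ i : Fin N, ε i ↔ (i : ℕ) < m := by
      intro i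
      rw [← hmem i, hS, Finset.mem_filter]
      simp
    have hm1 : 1 ≤ m := by
      have := (hε_iff i0).1 hεi0
      omega
    have hmN : m < N := by
      have h1 : ¬ ((j0 : ℕ) < m) := fun h => hεj0 ((hε_iff j0).2 h)
      have := j0.isLt
      omega
    have horder : ∀ i j : Fin N, ε i → ¬ ε j → σ j < σ i := by
      intro i j hi hj
      have h1 : (i : ℕ) < m := (hε_iff i).1 hi
      have h2 : ¬ ((j : ℕ) < m) := fun h => hj ((hε_iff j).2 h)
      have hij : i < j := by
        rw [Fin.lt_def]
        omega
      rcases lt_trichotomy (σ i) (σ j) with h' | h' | h'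
      · exact absurd ((hA i j hij h').1 hi) hj
      · exact absurd (σ.injective h') (ne_of_lt hij)
      · exact h'
    have hmono_pos : ∀ i j : Fin N, i < j → ε j → σ i < σ j := by
      intro i j hij hj
      rcases lt_trichotomy (σ i) (σ j) with h' | h' | h'
      · exact h'
      · exact absurd (σ.injective h') (ne_of_lt hij)
      · exact absurd hj (hB i j hij h').2
    have hmono_neg : ∀ i j : Fin N, i < j → ¬ ε i → σ i < σ j := by
      intro i j hij hi
      rcases lt_trichotomy (σ i) (σ j) with h' | h' | h'
      · exact h'
      · exact absurd (σ.injective h') (ne_of_lt hij)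
      · exact absurd (hB i j hij h').1 hi
    have hcardneg : (Finset.univ.filter (fun j : Fin N => ¬ ε j)).card = N - m := by
      have := Finset.card_filter_add_card_filter_not (s := (Finset.univ : Finset (Fin N))) (p := ε)
      rw [Finset.card_univ, Fintype.card_fin] at this
      rw [hm, hS] at *
      omega
    have hvalS : ∀ i : Fin N, ε i → N - m ≤ ((σ i : Fin N) : ℕ) := by
      intro i hi
      have himg : Finset.image σ (Finset.univ.filter (fun j : Fin N => ¬ ε j))
          ⊆ Finset.Iio (σ i) := by
        intro t ht
        rw [Finset.mem_image] at ht
        obtain ⟨j, hj, rfl⟩ := ht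
        rw [Finset.mem_filter] at hj
        exact Finset.mem_Iio.2 (horder i j hi hj.2)
      have hcard := Finset.card_le_card himg
      rw [Finset.card_image_of_injective _ σ.injective, Fin.card_Iio, hcardneg] at hcard
      omega
    have hvalSc : ∀ j : Fin N, ¬ ε j → ((σ j : Fin N) : ℕ) < N - m := by
      intro j hj
      have himg : Finset.image σ (Finset.univ.filter ε) ⊆ Finset.Ioi (σ j) := by
        intro t ht
        rw [Finset.mem_image] at ht
        obtain ⟨i, hi, rfl⟩ := ht
        rw [Finset.mem_filter] at hi
        exact Finset.mem_Ioi.2 (horder i j hi.2 hj)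
      have hcard := Finset.card_le_card himg
      rw [Finset.card_image_of_injective _ σ.injective, Fin.card_Ioi] at hcard
      have h2 : (Finset.univ.filter ε).card = m := by rw [hm, hS]
      rw [h2] at hcard
      have := (σ j).isLt
      omega
    have hmleN : m ≤ N := hmN.le
    -- piece 1 : indices < m
    have hS1 : ∀ i : Fin N, (i : ℕ) < m → ((σ i : Fin N) : ℕ) = (i : ℕ) + (N - m) := by
      have hg : StrictMono (fun a : Fin m =>
          (⟨((σ ⟨(a : ℕ), lt_of_lt_of_le a.isLt hmleN⟩ : Fin N) : ℕ) - (N - m), by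
            have hε : ε ⟨(a : ℕ), lt_of_lt_of_le a.isLt hmleN⟩ :=
              (hε_iff ⟨(a : ℕ), lt_of_lt_of_le a.isLt hmleN⟩).2 a.isLt
            have h1 := hvalS _ hε
            have h2 := (σ ⟨(a : ℕ), lt_of_lt_of_le a.isLt hmleN⟩).isLt
            omega⟩ : Fin m)) := by
        intro a b hab
        have hε : ε ⟨(b : ℕ), lt_of_lt_of_le b.isLt hmleN⟩ :=
          (hε_iff ⟨(b : ℕ), lt_of_lt_of_le b.isLt hmleN⟩).2 b.isLt
        have hlt : σ ⟨(a : ℕ), lt_of_lt_of_le a.isLt hmleN⟩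
            < σ ⟨(b : ℕ), lt_of_lt_of_le b.isLt hmleN⟩ :=
          hmono_pos _ _ (by rw [Fin.lt_def]; exact hab) hε
        have h1 := hvalS _ ((hε_iff ⟨(a : ℕ), lt_of_lt_of_le a.isLt hmleN⟩).2 a.isLt)
        rw [Fin.lt_def] at hlt ⊢
        simp only
        omega
      intro i hi
      have := fin_strictMono_id hg ⟨(i : ℕ), hi⟩
      have hval := congrArg Fin.val this
      simp only at hval
      have hieq : (⟨((⟨(i : ℕ), hi⟩ : Fin m) : ℕ), lt_of_lt_of_le (by exact hi) hmleN⟩ : Fin N)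
          = i := Fin.ext rfl
      rw [hieq] at hval
      have h1 := hvalS i ((hε_iff i).2 hi)
      omega
    -- piece 2 : indices ≥ m
    have hS2 : ∀ i : Fin N, m ≤ (i : ℕ) → ((σ i : Fin N) : ℕ) = (i : ℕ) - m := by
      have hg : StrictMono (fun b : Fin (N - m) =>
          (⟨((σ ⟨m + (b : ℕ), by have := b.isLt; omega⟩ : Fin N) : ℕ), by
            have hε : ¬ ε ⟨m + (b : ℕ), by have := b.isLt; omega⟩ := fun h => by
              have := (hε_iff _).1 h
              simp only at this
              omega
            exact hvalSc _ hε⟩ : Fin (N - m))) := by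
        intro a b hab
        have hε : ¬ ε ⟨m + (a : ℕ), by have := a.isLt; omega⟩ := fun h => by
          have := (hε_iff _).1 h
          simp only at this
          omega
        have hlt : σ ⟨m + (a : ℕ), by have := a.isLt; omega⟩
            < σ ⟨m + (b : ℕ), by have := b.isLt; omega⟩ :=
          hmono_neg _ _ (by rw [Fin.lt_def]; simp only; omega) hε
        rw [Fin.lt_def] at hlt ⊢
        simp only
        omega
      intro i hi
      have hb : (i : ℕ) - m < N - m := by have := i.isLt; omega
      have := fin_strictMono_id hg ⟨(i : ℕ) - m, hb⟩
      have hval := congrArg Fin.val this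
      simp only at hval
      have hieq : (⟨m + (((⟨(i : ℕ) - m, hb⟩ : Fin (N - m))) : ℕ), by
          have := i.isLt; simp only; omega⟩ : Fin N) = i := Fin.ext (by simp only; omega)
      rw [hieq] at hval
      exact hval
    refine ⟨⟨N - m, by omega⟩, fun i => ?_⟩
    apply Fin.ext
    rw [Fin.val_add]
    simp only
    by_cases h : (i : ℕ) < m
    · rw [hS1 i h, Nat.mod_eq_of_lt (by omega)]
    · rw [hS2 i (le_of_not_gt h)]
      have heq : (i : ℕ) + (N - m) = ((i : ℕ) - m) + N := by omega
      rw [heq, Nat.add_mod_right, Nat.mod_eq_of_lt (by have := i.isLt; omega)]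

/-- For the power-law cost `c(z) = z^p` on `[0,1]`: if `p > 1` the identity
permutation is optimal, and if `p < 0` (with no coinciding points) the optimum
is attained by a cyclic permutation. -/
theorem power_cost_optimal_structure {N : ℕ} (hN : 0 < N) (p : ℝ)
    (x y : Fin N → ℝ) (hx : StrictMono x) (hy : StrictMono y)
    (hx01 : ∀ i, x i ∈ Set.Icc (0:ℝ) 1) (hy01 : ∀ i, y i ∈ Set.Icc (0:ℝ) 1) :
    (1 < p → ∀ π : Equiv.Perm (Fin N),
        ∑ i, |x i - y i| ^ p ≤ ∑ i, |x i - y (π i)| ^ p) ∧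
    (p < 0 → (∀ i j, x i ≠ y j) →
      ∃ π : Equiv.Perm (Fin N), IsCyclicShift π ∧
        ∀ σ : Equiv.Perm (Fin N),
          ∑ i, |x i - y (π i)| ^ p ≤ ∑ i, |x i - y (σ i)| ^ p) := by
  constructor
  · intro hp π
    exact part1 hN hp x y hx.monotone hy.monotone π
  · intro hp hneq
    classical
    obtain ⟨π, -, hπ⟩ := Finset.exists_min_image Finset.univ
      (fun σ : Equiv.Perm (Fin N) => ∑ k, |x k - y (σ k)| ^ p) ⟨1, Finset.mem_univ 1⟩
    refine ⟨π, ?_, fun σ => hπ σ (Finset.mem_univ σ)⟩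
    have habs : ∀ {r s : ℝ}, r < s → |r - s| = s - r := by
      intro r s h
      rw [abs_of_neg (by linarith), neg_sub]
    have habs' : ∀ {r s : ℝ}, s < r → |r - s| = r - s := by
      intro r s h
      exact abs_of_pos (by linarith)
    have himp : ∀ i j : Fin N, i < j →
        |x i - y (π j)| ^ p + |x j - y (π i)| ^ p
          < |x i - y (π i)| ^ p + |x j - y (π j)| ^ p → False := by
      intro i j hij hlt
      have hijne : i ≠ j := ne_of_lt hij
      set σ' : Equiv.Perm (Fin N) := π * Equiv.swap i j with hσ'
      have happi : σ' i = π j := by rw [hσ', Equiv.Perm.mul_apply, Equiv.swap_apply_left]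
      have happj : σ' j = π i := by rw [hσ', Equiv.Perm.mul_apply, Equiv.swap_apply_right]
      have hsplit := sum_split (fun k => |x k - y (σ' k)| ^ p)
        (fun k => |x k - y (π k)| ^ p) hijne
        (fun k h1 h2 => by simp only [hσ', Equiv.Perm.mul_apply, Equiv.swap_apply_of_ne_of_ne h1 h2])
      simp only [happi, happj] at hsplit
      have hmin := hπ σ' (Finset.mem_univ σ')
      linarith
    -- show π is a cyclic shift using the combinatorial lemma
    apply comb hN π (fun i => x i < y (π i))
    · -- condition A
      intro i j hij hlt
      by_cases hi : x i < y (π i) <;> by_cases hj : x j < y (π j)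
      · exact iff_of_true hi hj
      · -- nested: x i < y (π i) < y (π j) < x j
        exfalso
        have h2 : y (π i) < y (π j) := hy hlt
        have h3 : y (π j) < x j := lt_of_le_of_ne (le_of_not_gt hj) (Ne.symm (hneq j (π j)))
        have h4 : x i < x j := hx hij
        apply himp i j hij
        rw [habs (show x i < y (π j) by linarith), habs' (show y (π i) < x j by linarith),
          habs hi, habs' h3]
        have i1 : (y (π j) - x i) ^ p < (y (π i) - x i) ^ p :=
          Real.rpow_lt_rpow_of_neg (by linarith) (by linarith) hp
        have i2 : (x j - y (π i)) ^ p < (x j - y (π j)) ^ p :=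
          Real.rpow_lt_rpow_of_neg (by linarith) (by linarith) hp
        linarith
      · -- nested: y (π i) < x i < x j < y (π j)
        exfalso
        have h1 : y (π i) < x i := lt_of_le_of_ne (le_of_not_gt hi) (Ne.symm (hneq i (π i)))
        have h4 : x i < x j := hx hij
        apply himp i j hij
        rw [habs (show x i < y (π j) by linarith), habs' (show y (π i) < x j by linarith),
          habs' h1, habs hj]
        have i1 : (y (π j) - x i) ^ p < (y (π j) - x j) ^ p :=
          Real.rpow_lt_rpow_of_neg (by linarith) (by linarith) hp
        have i2 : (x j - y (π i)) ^ p < (x i - y (π i)) ^ p :=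
          Real.rpow_lt_rpow_of_neg (by linarith) (by linarith) hp
        linarith
      · exact iff_of_false hi hj
    · -- condition B
      intro i j hij hlt
      have hvu : y (π j) < y (π i) := hy hlt
      have h4 : x i < x j := hx hij
      constructor
      · by_contra hi
        have h1 : y (π i) < x i := lt_of_le_of_ne (le_of_not_gt hi) (Ne.symm (hneq i (π i)))
        apply himp i j hij
        rw [habs' (show y (π j) < x i by linarith), habs' (show y (π i) < x j by linarith),
          habs' h1, habs' (show y (π j) < x j by linarith)]
        have hq := quad_strict (strictConvexOn_rpow_neg hp)
          (m := x i - y (π i)) (M := x j - y (π j))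
          (u := x i - y (π j)) (v := x j - y (π i))
          (by linarith) (by linarith) (by linarith) (by ring)
        simpa using hq
      · intro hj
        have h3 : x j < y (π j) := hj
        apply himp i j hij
        rw [habs (show x i < y (π j) by linarith), habs (show x j < y (π i) by linarith),
          habs (show x i < y (π i) by linarith), habs h3]
        have hq := quad_strict (strictConvexOn_rpow_neg hp)
          (m := y (π j) - x j) (M := y (π i) - x i)
          (u := y (π j) - x i) (v := y (π i) - x j)
          (by linarith) (by linarith) (by linarith) (by ring)
        have hq' : (y (π j) - x i) ^ p + (y (π i) - x j) ^ p
            < (y (π j) - x j) ^ p + (y (π i) - x i) ^ p := by simpa using hq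
        linarith
end

section
/- For p < 0, the function ĉ : [0,1] → ℝ defined by ĉ(z) = z^p for 0 < z ≤ 1/2 and ĉ(z) = (1−z)^p for 1/2 < z < 1 (the periodized power cost, equal to the p-th power of the distance on the unit circumference) is a C-function. -/
open Set

/-- For `p < 0`, `x ↦ x ^ p` is convex on `(0, ∞)`. -/
lemma convexOn_rpow_neg {p : ℝ} (hp : p < 0) :
    ConvexOn ℝ (Ioi (0 : ℝ)) fun x : ℝ => x ^ p := by
  have hderiv : ∀ x ∈ Ioi (0 : ℝ), deriv (fun x : ℝ => x ^ p) x = p * x ^ (p - 1) := by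
    intro x hx
    exact (Real.hasDerivAt_rpow_const (Or.inl (ne_of_gt hx))).deriv
  have hdiff : DifferentiableOn ℝ (fun x : ℝ => x ^ p) (Ioi 0) := fun x hx =>
    (Real.hasDerivAt_rpow_const (Or.inl (ne_of_gt hx))).differentiableAt.differentiableWithinAt
  refine convexOn_of_deriv2_nonneg' (convex_Ioi 0) hdiff ?_ ?_
  · intro x hx
    have hev : deriv (fun x : ℝ => x ^ p) =ᶠ[nhds x] fun x : ℝ => p * x ^ (p - 1) := by
      filter_upwards [IsOpen.mem_nhds isOpen_Ioi hx] with y hy using hderiv y hy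
    have : DifferentiableAt ℝ (fun x : ℝ => p * x ^ (p - 1)) x :=
      (Real.hasDerivAt_rpow_const (p := p - 1) (Or.inl (ne_of_gt hx))).differentiableAt.const_mul p
    exact (this.congr_of_eventuallyEq hev).differentiableWithinAt
  · intro x hx
    have hev : deriv (fun x : ℝ => x ^ p) =ᶠ[nhds x] fun x : ℝ => p * x ^ (p - 1) := by
      filter_upwards [IsOpen.mem_nhds isOpen_Ioi hx] with y hy using hderiv y hy
    have h2 : deriv^[2] (fun x : ℝ => x ^ p) x
        = deriv (fun x : ℝ => p * x ^ (p - 1)) x := by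
      simp only [Function.iterate_succ, Function.iterate_zero, Function.comp_apply, id]
      exact hev.deriv_eq
    rw [h2]
    have : HasDerivAt (fun x : ℝ => p * x ^ (p - 1)) (p * ((p - 1) * x ^ (p - 1 - 1))) x :=
      (Real.hasDerivAt_rpow_const (p := p - 1) (Or.inl (ne_of_gt hx))).const_mul p
    rw [this.deriv]
    have hxp : (0 : ℝ) ≤ x ^ (p - 1 - 1) := Real.rpow_nonneg (le_of_lt hx) _
    have : 0 ≤ p * (p - 1) := by nlinarith
    calc (0:ℝ) ≤ p * (p - 1) * x ^ (p - 1 - 1) := mul_nonneg this hxp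
      _ = p * ((p - 1) * x ^ (p - 1 - 1)) := by ring

/-- Increasing differences from convexity. -/
lemma convexOn_incr_diff {s : Set ℝ} {f : ℝ → ℝ} (hf : ConvexOn ℝ s f)
    {x y t : ℝ} (hx : x ∈ s) (hyt : y + t ∈ s) (hxy : x < y) (ht : 0 < t) :
    f y - f x ≤ f (y + t) - f (x + t) := by
  set d : ℝ := y + t - x with hd
  have hd0 : 0 < d := by simp only [hd]; linarith
  have hsum : (t / d) + ((y - x) / d) = 1 := by
    rw [← add_div, hd, div_eq_one_iff_eq (by linarith : y + t - x ≠ 0)]; ring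
  have h1 : f y ≤ (t / d) * f x + ((y - x) / d) * f (y + t) := by
    have := hf.2 hx hyt ((div_pos ht hd0).le)
      ((div_pos (show (0:ℝ) < y - x by linarith) hd0).le) hsum
    have heq : (t / d) • x + ((y - x) / d) • (y + t) = y := by
      simp only [smul_eq_mul]
      field_simp
      ring
    rwa [heq] at this
  have h2 : f (x + t) ≤ ((y - x) / d) * f x + (t / d) * f (y + t) := by
    have := hf.2 hx hyt ((div_pos (show (0:ℝ) < y - x by linarith) hd0).le)
      ((div_pos ht hd0).le) (by rw [add_comm]; exact hsum)
    have heq : ((y - x) / d) • x + (t / d) • (y + t) = x + t := by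
      simp only [smul_eq_mul]
      field_simp
      ring
    rwa [heq] at this
  have e1 : t / d * f x + (y - x) / d * f x = f x := by
    rw [← add_mul, hsum, one_mul]
  have e2 : t / d * f (y + t) + (y - x) / d * f (y + t) = f (y + t) := by
    rw [← add_mul, hsum, one_mul]
  linarith

/-- For `p < 0`, the periodized power cost (the `p`-th power of the distance on
the unit circumference) is a `𝒞`-function. -/
theorem periodized_power_cost_isCFunction (p : ℝ) (hp : p < 0) :
    IsCFunction (fun z : ℝ => if z ≤ 1 / 2 then z ^ p else (1 - z) ^ p) := by
  set g : ℝ → ℝ := fun x => max (x ^ p) ((1 - x) ^ p) with hg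
  -- the function agrees with g on (0,1)
  have hval : ∀ x : ℝ, 0 < x → x < 1 →
      (if x ≤ 1 / 2 then x ^ p else (1 - x) ^ p) = g x := by
    intro x hx0 hx1
    simp only [hg]
    split_ifs with h
    · exact (max_eq_left (Real.rpow_le_rpow_of_nonpos hx0 (by linarith) hp.le)).symm
    · exact (max_eq_right (Real.rpow_le_rpow_of_nonpos (by linarith) (by linarith) hp.le)).symm
  -- symmetry of g
  have hsymm : ∀ x : ℝ, g (1 - x) = g x := by
    intro x; simp only [hg, sub_sub_cancel, max_comm]
  -- convexity of g on (0,1)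
  have hconv : ConvexOn ℝ (Ioo (0:ℝ) 1) g := by
    have h1 : ConvexOn ℝ (Ioo (0:ℝ) 1) fun x : ℝ => x ^ p :=
      (convexOn_rpow_neg hp).subset (fun x hx => hx.1) (convex_Ioo 0 1)
    have h2 : ConvexOn ℝ (Ioo (0:ℝ) 1) fun x : ℝ => (1 - x) ^ p := by
      refine ⟨convex_Ioo 0 1, ?_⟩
      intro x hx y hy a b ha hb hab
      have hkey := (convexOn_rpow_neg hp).2 (x := 1 - x) (y := 1 - y)
        (by simp [mem_Ioo]; linarith [hx.2]) (by simp [mem_Ioo]; linarith [hy.2]) ha hb hab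
      have heq : a • (1 - x) + b • (1 - y) = 1 - (a • x + b • y) := by
        simp only [smul_eq_mul]; nlinarith
      rwa [heq] at hkey
    exact h1.sup h2
  intro z₁ z₂ hz1 h12 hz2
  have hz1' : z₁ ∈ Ioo (0:ℝ) 1 := ⟨hz1, by linarith⟩
  have hz2' : z₂ ∈ Ioo (0:ℝ) 1 := ⟨by linarith, hz2⟩
  constructor
  · intro η hη hη2
    simp only
    rw [hval z₁ hz1 (by linarith), hval z₂ (by linarith) hz2,
      hval (η + z₁) (by linarith) (by linarith), hval (η + z₂) (by linarith) (by linarith)]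
    have := convexOn_incr_diff hconv (x := z₁) (y := z₂) (t := η) hz1'
      ⟨by linarith, by linarith⟩ h12 hη
    rw [show η + z₂ = z₂ + η by ring, show η + z₁ = z₁ + η by ring]
    exact this
  · intro η hη hη1
    simp only
    rw [hval z₁ hz1 (by linarith), hval z₂ (by linarith) hz2,
      hval (η - z₂) (by linarith) (by linarith), hval (η - z₁) (by linarith) (by linarith)]
    have hsym2 : g (η - z₂) = g (z₂ + (1 - η)) := by
      rw [← hsymm (η - z₂)]; ring_nf
    have hsym1 : g (η - z₁) = g (z₁ + (1 - η)) := by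
      rw [← hsymm (η - z₁)]; ring_nf
    rw [hsym1, hsym2]
    exact convexOn_incr_diff hconv (x := z₁) (y := z₂) (t := 1 - η) hz1'
      ⟨by linarith, by linarith⟩ h12 (by linarith)
end

section
/- Let p > 1 and let 0 ≤ x₁ < x₂ < … < x_{2N} ≤ 1. Then for every perfect matching μ of {1,…,2N} (a partition into N unordered pairs), Σ_{i=1}^{N} (x_{2i} − x_{2i−1})^p ≤ Σ_{(i,j)∈μ} |xᵢ − x_j|^p; that is, the matching pairing consecutive points (x₁ with x₂, x₃ with x₄, …) is optimal for the matching problem on the interval with cost z^p. -/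
private lemma two_rpow_aux (a b : ℝ) (ha : 0 ≤ a) (hb : 0 ≤ b) {p : ℝ} (hp : 1 ≤ p) :
    a ^ p + b ^ p ≤ (a + b) ^ p := by
  have := NNReal.add_rpow_le_rpow_add (⟨a, ha⟩ : NNReal) (⟨b, hb⟩ : NNReal) hp
  exact_mod_cast this

private lemma sum_rpow_le_rpow_sum {α : Type*} {p : ℝ} (hp : 1 ≤ p) (s : Finset α)
    (f : α → ℝ) (hf : ∀ a ∈ s, 0 ≤ f a) :
    ∑ a ∈ s, f a ^ p ≤ (∑ a ∈ s, f a) ^ p := by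
  classical
  induction s using Finset.cons_induction with
  | empty => simp [Real.zero_rpow (by linarith : p ≠ 0)]
  | cons a s ha ih =>
    rw [Finset.sum_cons, Finset.sum_cons]
    have h0 : 0 ≤ f a := hf a (Finset.mem_cons_self a s)
    have hs0 : ∀ b ∈ s, 0 ≤ f b := fun b hb => hf b (Finset.mem_cons_of_mem hb)
    have hsum : 0 ≤ ∑ b ∈ s, f b := Finset.sum_nonneg hs0
    calc f a ^ p + ∑ b ∈ s, f b ^ p ≤ f a ^ p + (∑ b ∈ s, f b) ^ p := by
          linarith [ih hs0]
      _ ≤ (f a + ∑ b ∈ s, f b) ^ p := two_rpow_aux _ _ h0 hsum hp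

private lemma even_card_invariant {m : ℕ} (π : Equiv.Perm (Fin m))
    (hinv : ∀ i, π (π i) = i) (hfree : ∀ i, π i ≠ i) :
    ∀ n, ∀ A : Finset (Fin m), A.card = n → (∀ i ∈ A, π i ∈ A) → Even n := by
  classical
  intro n
  induction n using Nat.strong_induction_on with
  | _ n ih =>
    intro A hcard hA
    rcases A.eq_empty_or_nonempty with rfl | ⟨i, hi⟩
    · simp only [Finset.card_empty] at hcard
      rw [← hcard]; exact Even.zero
    · have hπi : π i ∈ A := hA i hi
      have hne : π i ≠ i := hfree i
      have hsub : ({i, π i} : Finset (Fin m)) ⊆ A := by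
        intro j hj
        rcases Finset.mem_insert.mp hj with rfl | hj
        · exact hi
        · rw [Finset.mem_singleton.mp hj]; exact hπi
      have hpair : ({i, π i} : Finset (Fin m)).card = 2 := by
        rw [Finset.card_insert_of_notMem (by simp [Ne.symm hne]), Finset.card_singleton]
      have h2n : 2 ≤ n := by
        have := Finset.card_le_card hsub
        omega
      set B := A \ {i, π i} with hB
      have hBcard : B.card = n - 2 := by
        rw [hB, Finset.card_sdiff_of_subset hsub, hpair, hcard]
      have hBinv : ∀ j ∈ B, π j ∈ B := by
        intro j hj
        rw [hB, Finset.mem_sdiff] at hj ⊢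
        refine ⟨hA j hj.1, ?_⟩
        intro hmem
        rcases Finset.mem_insert.mp hmem with h | h
        · apply hj.2
          have : j = π i := by rw [← h, hinv]
          simp [this]
        · apply hj.2
          have : j = i := by
            have := Finset.mem_singleton.mp h
            rw [← hinv j, this, hinv]
          simp [this]
      have heven := ih (n - 2) (by omega) B hBcard hBinv
      rcases heven with ⟨k, hk⟩
      exact ⟨k + 1, by omega⟩

private lemma sum_gaps_le {y : ℕ → ℝ} (hy : Monotone y) {N a b : ℕ} (hab : a ≤ b)
    (S : Finset (Fin N)) (hS : ∀ t ∈ S, a ≤ 2 * t.1 ∧ 2 * t.1 + 1 ≤ b) :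
    ∑ t ∈ S, (y (2 * t.1 + 1) - y (2 * t.1)) ≤ y b - y a := by
  classical
  have h1 : ∑ k ∈ S.image (fun t : Fin N => 2 * t.1), (y (k + 1) - y k)
      = ∑ t ∈ S, (y (2 * t.1 + 1) - y (2 * t.1)) :=
    Finset.sum_image (fun s _ t _ h => Fin.ext (by omega))
  rw [← h1]
  have hsub : S.image (fun t : Fin N => 2 * t.1) ⊆ Finset.Ico a b := by
    intro k hk
    rcases Finset.mem_image.mp hk with ⟨t, ht, rfl⟩
    have := hS t ht
    exact Finset.mem_Ico.mpr ⟨this.1, by omega⟩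
  calc ∑ k ∈ S.image (fun t : Fin N => 2 * t.1), (y (k + 1) - y k)
      ≤ ∑ k ∈ Finset.Ico a b, (y (k + 1) - y k) := by
        refine Finset.sum_le_sum_of_subset_of_nonneg hsub ?_
        intro k _ _
        have := hy (Nat.le_succ k)
        linarith
    _ = y b - y a := by
        rw [Finset.sum_Ico_eq_sub _ hab, Finset.sum_range_sub, Finset.sum_range_sub]
        ring

/-- For `p > 1` and `2N` increasingly ordered points on `[0,1]`, the matching
pairing consecutive points is optimal: a perfect matching is encoded as a
fixed-point-free involution `π`, each pair being counted twice in the sum. -/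
theorem matching_consecutive_pairs_optimal {N : ℕ} (p : ℝ) (hp : 1 < p)
    (x : Fin (2 * N) → ℝ) (hx : StrictMono x)
    (hx01 : ∀ i, x i ∈ Set.Icc (0:ℝ) 1)
    (π : Equiv.Perm (Fin (2 * N)))
    (hinv : ∀ i, π (π i) = i) (hfree : ∀ i, π i ≠ i) :
    ∑ i : Fin N, (x ⟨2 * i.1 + 1, by omega⟩ - x ⟨2 * i.1, by omega⟩) ^ p ≤
      (1 / 2) * ∑ i, |x i - x (π i)| ^ p := by
  classical
  rcases Nat.eq_zero_or_pos N with rfl | hN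
  · simp
  have hp1 : (1 : ℝ) ≤ p := hp.le
  set y : ℕ → ℝ := fun k => x ⟨min k (2 * N - 1), by omega⟩ with hy_def
  have hy : Monotone y := by
    intro k l hkl
    exact hx.monotone (show (⟨min k (2*N-1), by omega⟩ : Fin (2*N)) ≤ ⟨min l (2*N-1), by omega⟩ by
      rw [Fin.le_def]; simp; omega)
  have hyx : ∀ i : Fin (2 * N), y i.1 = x i := by
    intro i
    have h2 := i.2
    show x ⟨min i.1 (2 * N - 1), by omega⟩ = x i
    congr 1
    exact Fin.ext (by simp; omega)
  set g : Fin N → ℝ := fun t => y (2 * t.1 + 1) - y (2 * t.1) with hg_def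
  have hg0 : ∀ t, 0 ≤ g t := fun t => by
    have := hy (Nat.le_succ (2 * t.1)); simpa [hg_def] using this
  set cond : Fin (2 * N) → Fin N → Prop :=
    fun i t => min i.1 ((π i).1) ≤ 2 * t.1 ∧ 2 * t.1 + 1 ≤ max i.1 ((π i).1) with hcond_def
  -- edge bound
  have hedge : ∀ i : Fin (2 * N),
      ∑ t ∈ Finset.univ.filter (fun t => cond i t), g t ^ p ≤ |x i - x (π i)| ^ p := by
    intro i
    have hab : min i.1 ((π i).1) ≤ max i.1 ((π i).1) := min_le_max
    have habs : |x i - x (π i)| = y (max i.1 ((π i).1)) - y (min i.1 ((π i).1)) := by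
      rcases lt_trichotomy i.1 ((π i).1) with h | h | h
      · have hlt : x i < x (π i) := hx (by rwa [Fin.lt_def])
        rw [abs_sub_comm, abs_of_nonneg (by linarith),
          max_eq_right h.le, min_eq_left h.le, hyx, hyx]
      · exact absurd (Fin.ext h) (Ne.symm (hfree i))
      · have hlt : x (π i) < x i := hx (by rwa [Fin.lt_def])
        rw [abs_of_nonneg (by linarith),
          max_eq_left h.le, min_eq_right h.le, hyx, hyx]
    calc ∑ t ∈ Finset.univ.filter (fun t => cond i t), g t ^ p
        ≤ (∑ t ∈ Finset.univ.filter (fun t => cond i t), g t) ^ p :=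
          sum_rpow_le_rpow_sum hp1 _ _ (fun t _ => hg0 t)
      _ ≤ (y (max i.1 ((π i).1)) - y (min i.1 ((π i).1))) ^ p := by
          refine Real.rpow_le_rpow (Finset.sum_nonneg fun t _ => hg0 t) ?_ (by linarith)
          exact sum_gaps_le hy hab _ (fun t ht => (Finset.mem_filter.mp ht).2)
      _ = |x i - x (π i)| ^ p := by rw [habs]
  -- crossing bound
  have hcross : ∀ t : Fin N,
      2 * g t ^ p ≤ ∑ i : Fin (2 * N), (if cond i t then g t ^ p else 0) := by
    intro t
    obtain ⟨i0, hi0l, hi0r⟩ : ∃ i : Fin (2 * N), i.1 ≤ 2 * t.1 ∧ 2 * t.1 < (π i).1 := by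
      by_contra hcon
      push_neg at hcon
      have h2t : 2 * t.1 < 2 * N := by have := t.2; omega
      set A : Finset (Fin (2 * N)) := Finset.Iic ⟨2 * t.1, h2t⟩ with hA_def
      have hAcard : A.card = 2 * t.1 + 1 := by
        rw [hA_def, Fin.card_Iic]
      have hinvA : ∀ i ∈ A, π i ∈ A := by
        intro i hi
        rw [hA_def, Finset.mem_Iic, Fin.le_def] at hi ⊢
        exact hcon i hi
      have := even_card_invariant π hinv hfree A.card A rfl hinvA
      rw [hAcard] at this
      rcases this with ⟨k, hk⟩
      omega
    have hne : i0 ≠ π i0 := Ne.symm (hfree i0)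
    have hc1 : cond i0 t := by
      constructor
      · exact le_trans (min_le_left _ _) hi0l
      · exact le_trans hi0r (le_max_right _ _)
    have hc2 : cond (π i0) t := by
      constructor
      · rw [hinv i0]
        exact le_trans (min_le_right _ _) hi0l
      · rw [hinv i0]
        exact le_trans hi0r (le_max_left _ _)
    calc 2 * g t ^ p
        = ∑ i ∈ ({i0, π i0} : Finset (Fin (2 * N))), (if cond i t then g t ^ p else 0) := by
          rw [Finset.sum_pair hne, if_pos hc1, if_pos hc2]; ring
      _ ≤ ∑ i : Fin (2 * N), (if cond i t then g t ^ p else 0) := by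
          refine Finset.sum_le_sum_of_subset_of_nonneg (Finset.subset_univ _) ?_
          intro i _ _
          split_ifs
          · exact Real.rpow_nonneg (hg0 t) p
          · exact le_rfl
  -- put things together
  have hyk : ∀ (k : ℕ) (h : k < 2 * N), y k = x ⟨k, h⟩ := fun k h => hyx ⟨k, h⟩
  have hLHS : ∑ i : Fin N, (x ⟨2 * i.1 + 1, by omega⟩ - x ⟨2 * i.1, by omega⟩) ^ p
      = ∑ t : Fin N, g t ^ p := by
    refine Finset.sum_congr rfl fun t _ => ?_
    have ht := t.2
    show _ = (y (2 * t.1 + 1) - y (2 * t.1)) ^ p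
    rw [hyk (2 * t.1 + 1) (by omega), hyk (2 * t.1) (by omega)]
  have key : 2 * ∑ t : Fin N, g t ^ p ≤ ∑ i, |x i - x (π i)| ^ p := by
    calc 2 * ∑ t : Fin N, g t ^ p
        = ∑ t : Fin N, 2 * g t ^ p := by rw [Finset.mul_sum]
      _ ≤ ∑ t : Fin N, ∑ i : Fin (2 * N), (if cond i t then g t ^ p else 0) :=
          Finset.sum_le_sum fun t _ => hcross t
      _ = ∑ i : Fin (2 * N), ∑ t : Fin N, (if cond i t then g t ^ p else 0) :=
          Finset.sum_comm
      _ = ∑ i : Fin (2 * N), ∑ t ∈ Finset.univ.filter (fun t => cond i t), g t ^ p := by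
          refine Finset.sum_congr rfl fun i _ => ?_
          rw [Finset.sum_filter]
      _ ≤ ∑ i, |x i - x (π i)| ^ p := Finset.sum_le_sum fun i _ => hedge i
  refine le_trans (le_of_eq hLHS) ?_
  linarith
end

section
/- Let X₁,…,X_{2N} be independent uniform random variables on [0,1] with order statistics X₍₁₎ ≤ … ≤ X₍₂N₎, and for 1 ≤ l ≤ N set φ_l = X₍l+N₎ − X₍l₎. Then for all 1 ≤ l ≤ k ≤ N, E[ φ_l φ_k ] = ( N(N+1) − (k−l) ) / ( (2N+2)(2N+1) ). -/
open MeasureTheory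

/-- The uniform probability measure on `[0,1]`. -/
noncomputable def unif : Measure ℝ := volume.restrict (Set.Icc 0 1)

/-- The law of `n` independent uniform points on `[0,1]`. -/
noncomputable def unifPi (n : ℕ) : Measure (Fin n → ℝ) :=
  Measure.pi fun _ => unif

/-- The increasing rearrangement (order statistics) of a tuple. -/
noncomputable def sortedTuple {n : ℕ} (ω : Fin n → ℝ) (i : Fin n) : ℝ :=
  ω (Tuple.sort ω i)

instance : IsProbabilityMeasure unif :=
  ⟨by rw [unif, Measure.restrict_apply_univ, Real.volume_Icc]; norm_num⟩

instance (n : ℕ) : IsProbabilityMeasure (unifPi n) := by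
  rw [unifPi]; infer_instance

def box (n : ℕ) : Set (Fin n → ℝ) := {ω | ∀ i, ω i ∈ Set.Icc (0:ℝ) 1}

lemma unif_compl_Icc : unif (Set.Icc (0:ℝ) 1)ᶜ = 0 := by
  rw [unif, Measure.restrict_apply measurableSet_Icc.compl]
  simp

lemma ae_box (n : ℕ) : ∀ᵐ ω ∂unifPi n, ω ∈ box n := by
  have h : ∀ i : Fin n, ∀ᵐ ω ∂unifPi n, ω i ∈ Set.Icc (0:ℝ) 1 := by
    intro i
    rw [ae_iff]
    have hs : {ω : Fin n → ℝ | ¬ ω i ∈ Set.Icc (0:ℝ) 1}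
        = Function.eval i ⁻¹' (Set.Icc (0:ℝ) 1)ᶜ := rfl
    rw [hs, Set.eval_preimage, unifPi, Measure.pi_pi]
    exact Finset.prod_eq_zero (Finset.mem_univ i) (by simp [unif_compl_Icc])
  exact ae_all_iff.2 h

lemma measure_eq_coord {n : ℕ} {i j : Fin n} (hij : i ≠ j) :
    unifPi n {ω | ω i = ω j} = 0 := by
  cases n with
  | zero => exact i.elim0
  | succ m =>
    obtain ⟨c, hc⟩ := Fin.exists_succAbove_eq hij.symm
    set e := MeasurableEquiv.piFinSuccAbove (fun _ : Fin (m+1) => ℝ) i with he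
    have mp := measurePreserving_piFinSuccAbove (fun _ : Fin (m+1) => unif) i
    have hs : {ω : Fin (m+1) → ℝ | ω i = ω j}
        = e ⁻¹' {p : ℝ × (Fin m → ℝ) | p.1 = p.2 c} := by
      ext ω
      show ω i = ω j ↔ ω i = ω (i.succAbove c)
      rw [hc]
    have hmeas : MeasurableSet {p : ℝ × (Fin m → ℝ) | p.1 = p.2 c} :=
      measurableSet_eq_fun measurable_fst ((measurable_pi_apply c).comp measurable_snd)
    rw [hs]
    have := mp.measure_preimage hmeas.nullMeasurableSet
    rw [unifPi]
    rw [this]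
    rw [Measure.prod_apply hmeas]
    have hz : ∀ x : ℝ, (Measure.pi fun _ : Fin m => unif)
        {a : Fin m → ℝ | x = a c} = 0 := by
      intro x
      have h1 : {a : Fin m → ℝ | x = a c}
          = Function.eval c ⁻¹' ({x} : Set ℝ) := by
        ext y; simp [eq_comm]
      rw [h1, Set.eval_preimage, Measure.pi_pi]
      refine Finset.prod_eq_zero (Finset.mem_univ c) ?_
      simp only [Function.update_self]
      refine le_antisymm ?_ zero_le
      calc unif {x} ≤ volume {x} := by
            rw [unif]; exact Measure.restrict_le_self _
        _ = 0 := Real.volume_singleton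
    simp [hz]

lemma ae_inj (n : ℕ) : ∀ᵐ ω ∂unifPi n, Function.Injective ω := by
  rw [ae_iff]
  have hsub : {ω : Fin n → ℝ | ¬ Function.Injective ω} ⊆
      ⋃ (p : Fin n × Fin n) (_ : p.1 ≠ p.2), {ω : Fin n → ℝ | ω p.1 = ω p.2} := by
    intro ω hω
    simp only [Function.Injective, not_forall] at hω
    obtain ⟨i, j, hval, hne⟩ := hω
    exact Set.mem_iUnion.2 ⟨(i, j), Set.mem_iUnion.2 ⟨hne, hval⟩⟩
  refine measure_mono_null hsub (measure_iUnion_null fun p => measure_iUnion_null fun hne =>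
    measure_eq_coord hne)

lemma measurableSet_mono (n : ℕ) :
    MeasurableSet {ω : Fin n → ℝ | Monotone ω} := by
  have h : {ω : Fin n → ℝ | Monotone ω} =
      ⋂ (p : Fin n × Fin n), ⋂ (_ : p.1 ≤ p.2), {ω : Fin n → ℝ | ω p.1 ≤ ω p.2} := by
    ext ω
    simp only [Set.mem_iInter, Set.mem_setOf_eq]
    exact ⟨fun h p hp => h hp, fun h a b hab => h (a, b) hab⟩
  rw [h]
  exact MeasurableSet.iInter fun p => MeasurableSet.iInter fun _ =>
    measurableSet_le (measurable_pi_apply _) (measurable_pi_apply _)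

lemma measurableSet_strictMonoComp (n : ℕ) (σ : Equiv.Perm (Fin n)) :
    MeasurableSet {ω : Fin n → ℝ | StrictMono (ω ∘ σ)} := by
  have h : {ω : Fin n → ℝ | StrictMono (ω ∘ σ)} =
      ⋂ (p : Fin n × Fin n), ⋂ (_ : p.1 < p.2), {ω : Fin n → ℝ | ω (σ p.1) < ω (σ p.2)} := by
    ext ω
    simp only [Set.mem_iInter, Set.mem_setOf_eq]
    exact ⟨fun h p hp => h hp, fun h a b hab => h (a, b) hab⟩
  rw [h]
  exact MeasurableSet.iInter fun p => MeasurableSet.iInter fun _ =>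
    measurableSet_lt (measurable_pi_apply _) (measurable_pi_apply _)

lemma integrable_of_box {n : ℕ} {f : (Fin n → ℝ) → ℝ} (hf : Measurable f)
    (hb : ∀ ω ∈ box n, |f ω| ≤ 1) : Integrable f (unifPi n) := by
  refine Integrable.mono' (integrable_const 1) hf.aestronglyMeasurable ?_
  filter_upwards [ae_box n] with ω hω
  simpa [Real.norm_eq_abs] using hb ω hω

lemma monotone_cons_iff {n : ℕ} {x : ℝ} {y : Fin n → ℝ} :
    Monotone (Fin.cons x y : Fin (n+1) → ℝ) ↔ Monotone y ∧ ∀ j, x ≤ y j := by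
  constructor
  · intro h
    refine ⟨fun a b hab => ?_, fun j => ?_⟩
    · simpa using h (a := a.succ) (b := b.succ) (by simpa using hab)
    · simpa using h (a := 0) (b := j.succ) (Fin.zero_le _)
  · rintro ⟨hy, hx⟩ a b hab
    induction a using Fin.cases with
    | zero =>
      induction b using Fin.cases with
      | zero => exact le_rfl
      | succ b => simpa using hx b
    | succ a =>
      induction b using Fin.cases with
      | zero =>
        exact absurd (Fin.le_zero_iff.1 hab) (Fin.succ_ne_zero a)
      | succ b => simpa using hy (by simpa using hab)

lemma unif_pow_int (k : ℕ) {c : ℝ} (hc : c ∈ Set.Icc (0:ℝ) 1) :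
    ∫ x, (if x ≤ c then x ^ k else 0) ∂unif = c ^ (k+1) / (k+1) := by
  have h1 : (fun x : ℝ => if x ≤ c then x ^ k else 0)
      = (Set.Iic c).indicator (fun x => x ^ k) := by
    funext x; simp [Set.indicator_apply, Set.mem_Iic]
  rw [h1, unif, integral_indicator measurableSet_Iic,
    Measure.restrict_restrict measurableSet_Iic]
  have h2 : Set.Iic c ∩ Set.Icc 0 1 = Set.Icc 0 c := by
    ext t
    simp only [Set.mem_inter_iff, Set.mem_Iic, Set.mem_Icc]
    exact ⟨fun ⟨h, h0, _⟩ => ⟨h0, h⟩, fun ⟨h0, h⟩ => ⟨h, h0, le_trans h hc.2⟩⟩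
  rw [h2, MeasureTheory.integral_Icc_eq_integral_Ioc,
    ← intervalIntegral.integral_of_le hc.1, integral_pow]
  ring

lemma unif_pow (k : ℕ) : ∫ x, x ^ k ∂unif = 1 / (k+1) := by
  have h1 : ∫ x, (if x ≤ (1:ℝ) then x ^ k else 0) ∂unif = ∫ x, x ^ k ∂unif := by
    rw [unif]
    refine setIntegral_congr_fun measurableSet_Icc (fun x hx => ?_)
    exact if_pos hx.2
  rw [← h1, unif_pow_int k ⟨by norm_num, le_rfl⟩, one_pow]

lemma mono_monomial_integral : ∀ (n : ℕ) (f : Fin n → ℕ),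
    ∫ ω, Set.indicator {ω : Fin n → ℝ | Monotone ω} (fun ω => ∏ i, ω i ^ f i) ω ∂unifPi n
      = ∏ i : Fin n, ((∑ j, if j ≤ i then (f j : ℝ) else 0) + i.1 + 1)⁻¹ := by
  intro n
  induction n with
  | zero =>
    intro f
    have h1 : {ω : Fin 0 → ℝ | Monotone ω} = Set.univ := by
      ext ω
      simp only [Set.mem_setOf_eq, Set.mem_univ, iff_true]
      intro a _ _; exact a.elim0
    rw [h1]
    simp
  | succ m ih =>
    intro f
    classical
    set Mono1 : Set (Fin (m+1) → ℝ) := {ω | Monotone ω} with hM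
    set F : (Fin (m+1) → ℝ) → ℝ :=
      Set.indicator Mono1 (fun ω => ∏ i, ω i ^ f i) with hFdef
    have hFmeas : Measurable F :=
      (Finset.measurable_prod Finset.univ fun i _ =>
        (measurable_pi_apply i).pow_const (f i)).indicator (measurableSet_mono (m+1))
    have hFb : ∀ ω ∈ box (m+1), |F ω| ≤ 1 := by
      intro ω hω
      rw [hFdef, Set.indicator_apply]
      split_ifs with h
      · rw [Finset.abs_prod]
        refine Finset.prod_le_one (fun i _ => abs_nonneg _) (fun i _ => ?_)
        rw [abs_pow]
        exact pow_le_one₀ (abs_nonneg _) (abs_le.2 ⟨by linarith [(hω i).1], (hω i).2⟩)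
      · simp
    have hFint : Integrable F (unifPi (m+1)) := integrable_of_box hFmeas hFb
    set e := MeasurableEquiv.piFinSuccAbove (fun _ : Fin (m+1) => ℝ) 0 with he
    have mp : MeasurePreserving e.symm (unif.prod (unifPi m)) (unifPi (m+1)) :=
      (measurePreserving_piFinSuccAbove (fun _ : Fin (m+1) => unif) 0).symm e
    have hcomp : ∫ ω, F ω ∂unifPi (m+1) = ∫ p, F (e.symm p) ∂(unif.prod (unifPi m)) :=
      (mp.integral_comp' F).symm
    have hcons : ∀ p : ℝ × (Fin m → ℝ), e.symm p = Fin.cons p.1 p.2 := by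
      intro p
      obtain ⟨x, y⟩ := p
      rw [he]
      simp [MeasurableEquiv.piFinSuccAbove_symm_apply, Fin.insertNth_zero']
      rfl
    have hFc : Integrable (fun p : ℝ × (Fin m → ℝ) => F (e.symm p)) (unif.prod (unifPi m)) :=
      (mp.integrable_comp_emb e.symm.measurableEmbedding (g := F)).2 hFint
    rw [hcomp, integral_prod_symm _ hFc]
    set g : Fin m → ℕ := fun i => f i.succ + if i.1 = 0 then f 0 + 1 else 0 with hg
    have key : ∀ᵐ y ∂unifPi m,
        (∫ x, F (e.symm (x, y)) ∂unif)
          = Set.indicator {y : Fin m → ℝ | Monotone y}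
              (fun y => ∏ i, y i ^ g i) y / ((f 0 : ℝ) + 1) := by
      filter_upwards [ae_box m] with y hy
      by_cases hmy : Monotone y
      · have hFx : ∀ x : ℝ, F (e.symm (x, y))
            = (∏ i : Fin m, y i ^ f i.succ) * (if (∀ j, x ≤ y j) then x ^ f 0 else 0) := by
          intro x
          rw [hcons, hFdef, Set.indicator_apply]
          have hmem : (Fin.cons x y : Fin (m+1) → ℝ) ∈ Mono1 ↔ (∀ j, x ≤ y j) := by
            rw [hM]
            simp only [Set.mem_setOf_eq]
            rw [monotone_cons_iff]
            simp [hmy]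
          by_cases hx : ∀ j, x ≤ y j
          · rw [if_pos (hmem.2 hx), if_pos hx, Fin.prod_univ_succ, Fin.cons_zero]
            simp only [Fin.cons_succ]
            ring
          · rw [if_neg (fun hc => hx (hmem.1 hc)), if_neg hx, mul_zero]
        simp only [hFx]
        rw [integral_const_mul]
        rw [Set.indicator_of_mem (show y ∈ {y : Fin m → ℝ | Monotone y} from hmy)]
        rcases Nat.eq_zero_or_pos m with hm0 | hmpos
        · subst hm0
          have h0 : (fun x : ℝ => if (∀ j : Fin 0, x ≤ y j) then x ^ f 0 else 0)
              = fun x => x ^ f 0 := by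
            funext x; exact if_pos (fun j => j.elim0)
          rw [h0, unif_pow]
          simp
        · set z : Fin m := ⟨0, hmpos⟩ with hz
          have hcond : (fun x : ℝ => if (∀ j, x ≤ y j) then x ^ f 0 else 0)
              = fun x => if x ≤ y z then x ^ f 0 else 0 := by
            funext x
            congr 1
            simp only [eq_iff_iff]
            constructor
            · intro h; exact h z
            · intro h j
              exact le_trans h (hmy (show z ≤ j by simp [hz, Fin.le_def]))
          rw [hcond, unif_pow_int (f 0) (hy z)]
          have hprod : ∏ i : Fin m, y i ^ g i
              = (∏ i : Fin m, y i ^ f i.succ) * y z ^ (f 0 + 1) := by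
            rw [hg]
            simp only [pow_add]
            rw [Finset.prod_mul_distrib]
            congr 1
            have hterm : ∀ i : Fin m, y i ^ (if i.1 = 0 then f 0 + 1 else 0)
                = if i = z then y i ^ (f 0 + 1) else 1 := by
              intro i
              by_cases hi : i = z
              · subst hi; rw [if_pos rfl, if_pos rfl]
              · rw [if_neg hi, if_neg (fun h => hi (Fin.ext (by simp [h, hz]))), pow_zero]
            simp only [hterm]
            rw [Finset.prod_ite_eq' Finset.univ z (fun i => y i ^ (f 0 + 1))]
            simp [pow_succ]
          rw [hprod]
          ring
      · have hFx : ∀ x : ℝ, F (e.symm (x, y)) = 0 := by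
          intro x
          rw [hcons, hFdef]
          refine Set.indicator_of_notMem ?_ _
          rw [hM]
          simp only [Set.mem_setOf_eq]
          rw [monotone_cons_iff]
          exact fun h => hmy h.1
        simp only [hFx]
        rw [Set.indicator_of_notMem (show y ∉ {y : Fin m → ℝ | Monotone y} from hmy)]
        simp
    rw [integral_congr_ae key, integral_div, ih g]
    rw [Fin.prod_univ_succ]
    have h00 : (∑ j : Fin (m+1), if j ≤ 0 then (f j : ℝ) else 0) = f 0 := by
      rw [Finset.sum_eq_single 0]
      · simp
      · intro j _ hj
        rw [if_neg (fun hle => hj (Fin.le_zero_iff.1 hle))]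
      · simp
    have hsucc : ∀ i : Fin m, (∑ j : Fin (m+1), if j ≤ i.succ then (f j : ℝ) else 0)
        = f 0 + ∑ j : Fin m, if j ≤ i then (f j.succ : ℝ) else 0 := by
      intro i
      rw [Fin.sum_univ_succ, if_pos (Fin.zero_le _)]
      congr 1
      refine Finset.sum_congr rfl fun j _ => ?_
      exact if_congr (by simp [Fin.succ_le_succ_iff]) rfl rfl
    have hSg : ∀ i : Fin m, (∑ j : Fin m, if j ≤ i then (g j : ℝ) else 0)
        = (∑ j : Fin m, if j ≤ i then (f j.succ : ℝ) else 0) + ((f 0 : ℝ) + 1) := by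
      intro i
      set z : Fin m := ⟨0, i.pos⟩ with hz
      have hgj : ∀ j : Fin m, (if j ≤ i then (g j : ℝ) else 0)
          = (if j ≤ i then (f j.succ : ℝ) else 0)
            + (if j = z then (f 0 : ℝ) + 1 else 0) := by
        intro j
        by_cases hjz : j = z
        · have hj0 : (j : ℕ) = 0 := by rw [hjz]
          have hji : j ≤ i := by simp [Fin.le_def, hj0]
          rw [if_pos hjz, if_pos hji, if_pos hji, hg]
          push_cast
          simp [hj0]
        · have hj0 : ¬ (j : ℕ) = 0 := fun h => hjz (Fin.ext (by simp [h, hz]))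
          rw [if_neg hjz, add_zero]
          by_cases hji : j ≤ i
          · rw [if_pos hji, if_pos hji, hg]
            push_cast
            simp [hj0]
          · rw [if_neg hji, if_neg hji]
      calc ∑ j : Fin m, (if j ≤ i then (g j : ℝ) else 0)
          = ∑ j : Fin m, ((if j ≤ i then (f j.succ : ℝ) else 0)
              + (if j = z then (f 0 : ℝ) + 1 else 0)) :=
            Finset.sum_congr rfl fun j _ => hgj j
        _ = _ := by
            rw [Finset.sum_add_distrib]
            congr 1
            rw [Finset.sum_ite_eq' Finset.univ z (fun _ => (f 0 : ℝ) + 1)]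
            simp
    rw [h00]
    rw [div_eq_mul_inv, mul_comm]
    congr 1
    · norm_num
    · refine Finset.prod_congr rfl fun i _ => ?_
      rw [hSg i, hsucc i, Fin.val_succ]
      congr 1
      push_cast
      ring

lemma count_Q (a : ℕ) : ∀ m : ℕ, a < m →
    (a+1) * ∏ i ∈ Finset.range m, (i + 1 + if a ≤ i then 1 else 0) = (m+1).factorial := by
  intro m
  induction m with
  | zero => omega
  | succ m ihm =>
    intro ham
    rw [Finset.prod_range_succ]
    rcases Nat.lt_or_ge a m with h | h
    · have h1 := ihm h
      have hw : m + 1 + (if a ≤ m then 1 else 0) = m + 2 := by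
        simp [Nat.le_of_lt h]
      rw [hw, ← mul_assoc, h1, Nat.factorial_succ (m+1)]
      ring
    · have ha : a = m := by omega
      subst ha
      have hP : ∏ i ∈ Finset.range a, (i + 1 + if a ≤ i then 1 else 0)
          = ∏ i ∈ Finset.range a, (i + 1) := by
        refine Finset.prod_congr rfl fun i hi => ?_
        simp [Nat.not_le.2 (Finset.mem_range.1 hi)]
      rw [hP, Finset.prod_range_add_one_eq_factorial]
      have hw : a + 1 + (if a ≤ a then 1 else 0) = a + 2 := by simp
      rw [hw, Nat.factorial_succ (a+1), Nat.factorial_succ a]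
      ring

lemma count_R (a b : ℕ) (hab : a ≤ b) : ∀ n : ℕ, b < n →
    (a+1) * (b+2) * ∏ i ∈ Finset.range n,
      (i + 1 + (if a ≤ i then 1 else 0) + (if b ≤ i then 1 else 0)) = (n+2).factorial := by
  intro n
  induction n with
  | zero => omega
  | succ n ihn =>
    intro hbn
    rw [Finset.prod_range_succ]
    rcases Nat.lt_or_ge b n with h | h
    · have h1 := ihn h
      have hw : n + 1 + (if a ≤ n then 1 else 0) + (if b ≤ n then 1 else 0) = n + 3 := by
        simp [Nat.le_of_lt h, Nat.le_of_lt (Nat.lt_of_le_of_lt hab h)]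
      rw [hw, ← mul_assoc, h1, Nat.factorial_succ (n+2)]
      ring
    · have hb : b = n := by omega
      subst hb
      have hP : ∏ i ∈ Finset.range b,
            (i + 1 + (if a ≤ i then 1 else 0) + (if b ≤ i then 1 else 0))
          = ∏ i ∈ Finset.range b, (i + 1 + if a ≤ i then 1 else 0) := by
        refine Finset.prod_congr rfl fun i hi => ?_
        simp [Nat.not_le.2 (Finset.mem_range.1 hi)]
      have hw : b + 1 + (if a ≤ b then 1 else 0) + (if b ≤ b then 1 else 0) = b + 3 := by
        simp [hab]
      rw [hP, hw]
      rcases Nat.lt_or_ge a b with ha | ha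
      · have h1 := count_Q a b ha
        calc (a+1) * (b+2) * ((∏ i ∈ Finset.range b, (i + 1 + if a ≤ i then 1 else 0)) * (b+3))
            = (b+2) * (b+3) * ((a+1) * ∏ i ∈ Finset.range b, (i + 1 + if a ≤ i then 1 else 0)) := by ring
          _ = (b+2) * (b+3) * (b+1).factorial := by rw [h1]
          _ = (b+3).factorial := by
                rw [show b+3 = (b+2)+1 from rfl, Nat.factorial_succ (b+2), Nat.factorial_succ (b+1)]
                ring
      · have ha' : a = b := Nat.le_antisymm hab ha
        subst ha'
        have hP2 : ∏ i ∈ Finset.range a, (i + 1 + if a ≤ i then 1 else 0)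
            = ∏ i ∈ Finset.range a, (i + 1) := by
          refine Finset.prod_congr rfl fun i hi => ?_
          simp [Nat.not_le.2 (Finset.mem_range.1 hi)]
        rw [hP2, Finset.prod_range_add_one_eq_factorial]
        rw [show a+3 = (a+2)+1 from rfl, Nat.factorial_succ (a+2), Nat.factorial_succ (a+1),
          Nat.factorial_succ a]
        ring

lemma mono_pair_integral (n : ℕ) (a b : Fin n) (hab : a ≤ b) :
    ∫ ω, Set.indicator {ω : Fin n → ℝ | Monotone ω} (fun ω => ω a * ω b) ω ∂unifPi n
      = ((a.1 : ℝ) + 1) * ((b.1 : ℝ) + 2) / (n + 2).factorial := by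
  classical
  have hmono : ∀ ω : Fin n → ℝ, ω a * ω b
      = ∏ i, ω i ^ ((if i = a then 1 else 0) + (if i = b then 1 else 0)) := by
    intro ω
    simp only [pow_add]
    rw [Finset.prod_mul_distrib]
    congr 1
    · have h : ∀ i : Fin n, ω i ^ (if i = a then 1 else 0) = if i = a then ω i else 1 := by
        intro i; split_ifs <;> simp
      simp only [h]
      rw [Finset.prod_ite_eq' Finset.univ a (fun i => ω i)]
      simp
    · have h : ∀ i : Fin n, ω i ^ (if i = b then 1 else 0) = if i = b then ω i else 1 := by
        intro i; split_ifs <;> simp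
      simp only [h]
      rw [Finset.prod_ite_eq' Finset.univ b (fun i => ω i)]
      simp
  have hrw : Set.indicator {ω : Fin n → ℝ | Monotone ω} (fun ω => ω a * ω b)
      = Set.indicator {ω : Fin n → ℝ | Monotone ω}
          (fun ω => ∏ i, ω i ^ ((if i = a then 1 else 0) + (if i = b then 1 else 0))) :=
    congrArg (Set.indicator {ω : Fin n → ℝ | Monotone ω}) (funext hmono)
  rw [hrw, mono_monomial_integral n
    (fun i => (if i = a then 1 else 0) + (if i = b then 1 else 0))]
  have hsum : ∀ i : Fin n,
      (∑ j : Fin n, if j ≤ i then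
          (((if j = a then 1 else 0) + (if j = b then 1 else 0) : ℕ) : ℝ) else 0)
        = (if a ≤ i then (1:ℝ) else 0) + (if b ≤ i then (1:ℝ) else 0) := by
    intro i
    have hterm : ∀ j : Fin n, (if j ≤ i then
          (((if j = a then 1 else 0) + (if j = b then 1 else 0) : ℕ) : ℝ) else 0)
        = (if j = a then (if j ≤ i then (1:ℝ) else 0) else 0)
          + (if j = b then (if j ≤ i then (1:ℝ) else 0) else 0) := by
      intro j
      push_cast
      split_ifs <;> norm_num
    simp only [hterm]
    rw [Finset.sum_add_distrib,
      Finset.sum_ite_eq' Finset.univ a (fun j => if j ≤ i then (1:ℝ) else 0),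
      Finset.sum_ite_eq' Finset.univ b (fun j => if j ≤ i then (1:ℝ) else 0)]
    simp
  simp only [hsum]
  rw [Finset.prod_inv_distrib]
  set Pn : ℕ := ∏ i ∈ Finset.range n,
      (i + 1 + (if a.1 ≤ i then 1 else 0) + (if b.1 ≤ i then 1 else 0)) with hPn
  have hprod : (∏ i : Fin n, ((if a ≤ i then (1:ℝ) else 0) + (if b ≤ i then (1:ℝ) else 0)
        + i.1 + 1)) = (Pn : ℝ) := by
    rw [hPn, Nat.cast_prod]
    rw [← Fin.prod_univ_eq_prod_range (fun t : ℕ =>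
      (((t + 1 + (if a.1 ≤ t then 1 else 0) + (if b.1 ≤ t then 1 else 0) : ℕ)) : ℝ)) n]
    refine Finset.prod_congr rfl fun i _ => ?_
    push_cast
    rw [if_congr (Iff.symm (Fin.le_def (a := a) (b := i))) rfl rfl,
      if_congr (Iff.symm (Fin.le_def (a := b) (b := i))) rfl rfl]
    ring
  rw [hprod]
  have hab' : a.1 ≤ b.1 := hab
  have hR := count_R a.1 b.1 hab' n b.isLt
  have h1 : ((a.1:ℝ)+1) * ((b.1:ℝ)+2) * (Pn:ℝ) = ((n+2).factorial : ℝ) := by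
    rw [hPn]
    exact_mod_cast congrArg (Nat.cast : ℕ → ℝ) hR
  have hP0 : (Pn:ℝ) ≠ 0 := by
    have : 0 < Pn := Finset.prod_pos fun i _ => by omega
    positivity
  have hf0 : ((n+2).factorial : ℝ) ≠ 0 := by
    exact_mod_cast (n+2).factorial_ne_zero
  field_simp
  linarith [h1]

lemma sorted_integral (n : ℕ) (F : (Fin n → ℝ) → ℝ) (hF : Measurable F)
    (hb : ∀ ω ∈ box n, |F ω| ≤ 1) :
    ∫ ω, F (sortedTuple ω) ∂unifPi n
      = n.factorial * ∫ ω, Set.indicator {ω : Fin n → ℝ | Monotone ω} F ω ∂unifPi n := by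
  classical
  have hbcomp : ∀ (σ : Equiv.Perm (Fin n)) (ω : Fin n → ℝ), ω ∈ box n → (ω ∘ σ) ∈ box n :=
    fun σ ω hω i => hω (σ i)
  have hstep1 : ∀ᵐ ω ∂unifPi n, F (sortedTuple ω)
      = ∑ σ : Equiv.Perm (Fin n),
          Set.indicator {ω : Fin n → ℝ | StrictMono (ω ∘ σ)} (fun ω => F (ω ∘ σ)) ω := by
    filter_upwards [ae_inj n] with ω hω
    have hσ0 : StrictMono (ω ∘ Tuple.sort ω) :=
      (Tuple.monotone_sort ω).strictMono_of_injective (hω.comp (Equiv.injective _))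
    rw [Finset.sum_eq_single (Tuple.sort ω)]
    · rw [Set.indicator_of_mem
        (show ω ∈ {ω' : Fin n → ℝ | StrictMono (ω' ∘ ⇑(Tuple.sort ω))} from hσ0)]
      rfl
    · intro σ _ hσne
      refine Set.indicator_of_notMem (fun hσ => hσne ?_) _
      have h1 : ω ∘ σ = ω ∘ Tuple.sort ω :=
        Tuple.comp_sort_eq_comp_iff_monotone.mpr (hσ : StrictMono (ω ∘ σ)).monotone
      exact Equiv.ext fun i => hω (congrFun h1 i)
    · intro h
      exact absurd (Finset.mem_univ _) h
  have hint : ∀ σ : Equiv.Perm (Fin n),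
      Integrable (fun ω => Set.indicator {ω : Fin n → ℝ | StrictMono (ω ∘ σ)}
        (fun ω => F (ω ∘ σ)) ω) (unifPi n) := by
    intro σ
    refine integrable_of_box ?_ ?_
    · exact ((hF.comp (measurable_pi_iff.2 fun i => measurable_pi_apply (σ i)))).indicator
        (measurableSet_strictMonoComp n σ)
    · intro ω hω
      rw [Set.indicator_apply]
      split_ifs with h
      · exact hb _ (hbcomp σ ω hω)
      · simp
  rw [integral_congr_ae hstep1, integral_finset_sum Finset.univ (fun σ _ => hint σ)]
  have hterm : ∀ σ : Equiv.Perm (Fin n),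
      ∫ ω, Set.indicator {ω : Fin n → ℝ | StrictMono (ω ∘ σ)} (fun ω => F (ω ∘ σ)) ω ∂unifPi n
        = ∫ ω, Set.indicator {ω : Fin n → ℝ | StrictMono ω} F ω ∂unifPi n := by
    intro σ
    set e := MeasurableEquiv.piCongrLeft (fun _ : Fin n => ℝ) (σ : Fin n ≃ Fin n) with he
    have mp : MeasurePreserving e.symm (unifPi n) (unifPi n) :=
      (measurePreserving_piCongrLeft (fun _ : Fin n => unif) (σ : Fin n ≃ Fin n)).symm e
    have hes : ∀ ω : Fin n → ℝ, e.symm ω = ω ∘ σ := by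
      intro ω
      funext i
      rfl
    rw [← mp.integral_comp' (Set.indicator {ω : Fin n → ℝ | StrictMono ω} F)]
    refine integral_congr_ae (Filter.Eventually.of_forall fun ω => ?_)
    show Set.indicator {ω : Fin n → ℝ | StrictMono (ω ∘ σ)} (fun ω => F (ω ∘ σ)) ω
        = Set.indicator {ω : Fin n → ℝ | StrictMono ω} F (e.symm ω)
    rw [hes ω]
    by_cases h : StrictMono (ω ∘ σ)
    · rw [Set.indicator_of_mem (show ω ∈ {ω : Fin n → ℝ | StrictMono (ω ∘ σ)} from h),
        Set.indicator_of_mem (show (ω ∘ σ) ∈ {ω : Fin n → ℝ | StrictMono ω} from h)]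
    · rw [Set.indicator_of_notMem (show ω ∉ {ω : Fin n → ℝ | StrictMono (ω ∘ σ)} from h),
        Set.indicator_of_notMem (show (ω ∘ σ) ∉ {ω : Fin n → ℝ | StrictMono ω} from h)]
  rw [Finset.sum_congr rfl (fun σ _ => hterm σ), Finset.sum_const, Finset.card_univ,
    Fintype.card_perm, Fintype.card_fin, nsmul_eq_mul]
  congr 1
  refine integral_congr_ae ?_
  filter_upwards [ae_inj n] with ω hω
  by_cases h : Monotone ω
  · rw [Set.indicator_of_mem (show ω ∈ {ω : Fin n → ℝ | StrictMono ω}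
      from h.strictMono_of_injective hω),
      Set.indicator_of_mem (show ω ∈ {ω : Fin n → ℝ | Monotone ω} from h)]
  · rw [Set.indicator_of_notMem (show ω ∉ {ω : Fin n → ℝ | StrictMono ω}
      from fun hs => h hs.monotone),
      Set.indicator_of_notMem (show ω ∉ {ω : Fin n → ℝ | Monotone ω} from h)]

lemma integrable_ind_pair (n : ℕ) (a b : Fin n) :
    Integrable (fun ω => Set.indicator {ω : Fin n → ℝ | Monotone ω}
      (fun ω => ω a * ω b) ω) (unifPi n) := by
  refine integrable_of_box ?_ ?_
  · exact ((measurable_pi_apply a).mul (measurable_pi_apply b)).indicator (measurableSet_mono n)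
  · intro ω hω
    rw [Set.indicator_apply]
    split_ifs with h
    · rw [abs_mul]
      have h1 : |ω a| ≤ 1 := abs_le.2 ⟨by linarith [(hω a).1], (hω a).2⟩
      have h2 : |ω b| ≤ 1 := abs_le.2 ⟨by linarith [(hω b).1], (hω b).2⟩
      calc |ω a| * |ω b| ≤ 1 * 1 := mul_le_mul h1 h2 (abs_nonneg _) zero_le_one
        _ = 1 := mul_one 1
    · simp

lemma main_aux {n : ℕ} (L K A B : Fin n) (hLK : L ≤ K) (hKA : K ≤ A) (hAB : A ≤ B) :
    ∫ ω, (sortedTuple ω A - sortedTuple ω L) * (sortedTuple ω B - sortedTuple ω K) ∂unifPi n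
      = n.factorial * ( ((A.1:ℝ)+1)*((B.1:ℝ)+2) - ((K.1:ℝ)+1)*((A.1:ℝ)+2)
          - ((L.1:ℝ)+1)*((B.1:ℝ)+2) + ((L.1:ℝ)+1)*((K.1:ℝ)+2) ) / (n+2).factorial := by
  classical
  have hmeas : Measurable (fun ω : Fin n → ℝ => (ω A - ω L) * (ω B - ω K)) :=
    ((measurable_pi_apply A).sub (measurable_pi_apply L)).mul
      ((measurable_pi_apply B).sub (measurable_pi_apply K))
  have hbox : ∀ ω ∈ box n, |(ω A - ω L) * (ω B - ω K)| ≤ 1 := by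
    intro ω hω
    rw [abs_mul]
    have h1 : |ω A - ω L| ≤ 1 :=
      abs_le.2 ⟨by linarith [(hω A).1, (hω L).2], by linarith [(hω A).2, (hω L).1]⟩
    have h2 : |ω B - ω K| ≤ 1 :=
      abs_le.2 ⟨by linarith [(hω B).1, (hω K).2], by linarith [(hω B).2, (hω K).1]⟩
    calc |ω A - ω L| * |ω B - ω K| ≤ 1 * 1 := mul_le_mul h1 h2 (abs_nonneg _) zero_le_one
      _ = 1 := mul_one 1
  refine Eq.trans (sorted_integral n (fun ω => (ω A - ω L) * (ω B - ω K)) hmeas hbox) ?_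
  have hexp : ∀ ω : Fin n → ℝ,
      Set.indicator {ω : Fin n → ℝ | Monotone ω} (fun ω => (ω A - ω L) * (ω B - ω K)) ω
        = Set.indicator {ω : Fin n → ℝ | Monotone ω} (fun ω => ω A * ω B) ω
          - Set.indicator {ω : Fin n → ℝ | Monotone ω} (fun ω => ω K * ω A) ω
          - Set.indicator {ω : Fin n → ℝ | Monotone ω} (fun ω => ω L * ω B) ω
          + Set.indicator {ω : Fin n → ℝ | Monotone ω} (fun ω => ω L * ω K) ω := by
    intro ω
    simp only [Set.indicator_apply]
    split_ifs <;> ring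
  rw [integral_congr_ae (Filter.Eventually.of_forall hexp)]
  have hi1 := integrable_ind_pair n A B
  have hi2 := integrable_ind_pair n K A
  have hi3 := integrable_ind_pair n L B
  have hi4 := integrable_ind_pair n L K
  have hi12 : Integrable (fun ω =>
      Set.indicator {ω : Fin n → ℝ | Monotone ω} (fun ω => ω A * ω B) ω
        - Set.indicator {ω : Fin n → ℝ | Monotone ω} (fun ω => ω K * ω A) ω)
      (unifPi n) := hi1.sub hi2
  have hi123 : Integrable (fun ω =>
      Set.indicator {ω : Fin n → ℝ | Monotone ω} (fun ω => ω A * ω B) ω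
        - Set.indicator {ω : Fin n → ℝ | Monotone ω} (fun ω => ω K * ω A) ω
        - Set.indicator {ω : Fin n → ℝ | Monotone ω} (fun ω => ω L * ω B) ω)
      (unifPi n) := hi12.sub hi3
  rw [integral_add hi123 hi4, integral_sub hi12 hi3, integral_sub hi1 hi2]
  rw [mono_pair_integral n A B hAB, mono_pair_integral n K A hKA,
    mono_pair_integral n L B (hLK.trans (hKA.trans hAB)), mono_pair_integral n L K hLK]
  ring


/-- For a uniform sample of `2N` points, with `φ_l = X₍l+N₎ − X₍l₎`,
`E[φ_l φ_k] = (N(N+1) − (k−l)) / ((2N+2)(2N+1))` for `1 ≤ l ≤ k ≤ N`. -/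
theorem crossing_length_pair_correlation {N : ℕ} (hN : 0 < N)
    (l k : Fin N) (hlk : l ≤ k) :
    ∫ ω : Fin (2 * N) → ℝ,
        (sortedTuple ω ⟨l.1 + N, by omega⟩ - sortedTuple ω ⟨l.1, by omega⟩) *
          (sortedTuple ω ⟨k.1 + N, by omega⟩ - sortedTuple ω ⟨k.1, by omega⟩)
      ∂(unifPi (2 * N)) =
      ((N : ℝ) * (N + 1) - ((k.1 : ℝ) - (l.1 : ℝ))) /
        ((2 * N + 2) * (2 * N + 1)) := by
  have hlk' : l.1 ≤ k.1 := hlk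
  have h := main_aux (n := 2*N) ⟨l.1, by omega⟩ ⟨k.1, by omega⟩
      ⟨l.1 + N, by omega⟩ ⟨k.1 + N, by omega⟩
      (by rw [Fin.mk_le_mk]; omega) (by rw [Fin.mk_le_mk]; omega)
      (by rw [Fin.mk_le_mk]; omega)
  refine Eq.trans h ?_
  simp only []
  have hfact : ((2*N+2).factorial : ℝ) = (2*(N:ℝ)+2) * ((2*(N:ℝ)+1) * ((2*N).factorial : ℝ)) := by
    rw [show 2*N+2 = (2*N+1)+1 from rfl, Nat.factorial_succ, Nat.factorial_succ]
    push_cast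
    ring
  have hne : ((2*N).factorial : ℝ) ≠ 0 := by exact_mod_cast (2*N).factorial_ne_zero
  rw [hfact]
  have hd1 : (2*(N:ℝ)+2) ≠ 0 := by positivity
  have hd2 : (2*(N:ℝ)+1) ≠ 0 := by positivity
  field_simp
  push_cast
  ring
end
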